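/- arXiv:2508.12926 — 5 statements merged into one kernel-verified Lean document; each statement's English description precedes it below -/
import Mathlib

section
/- Let M ≥ 0 be an integer and let c, σ_min > 0, q ≥ 2 and C ≥ 1 be reals. Let (X_i)_{i∈ℕ} be a sequence in the class D(M, q, c, σ_min, C) and for p ∈ ℕ set X := (X_1, …, X_p) ∈ ℝ^p. If p ≥ M + 2, then there exists a unique vector m ∈ ℝ^p minimizing the map m ↦ E‖X − m‖ over ℝ^p, where ‖·‖ is the Euclidean norm on ℝ^p. -/
open MeasureTheory ProbabilityTheory Filter
open scoped ENNReal

noncomputable section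

/-- `M`-dependence of a sequence of real random variables: for every `k`,
the family `(X_i)_{i ≤ k}` is independent of the family `(X_i)_{i ≥ k+M+1}`. -/
def MDependent {Ω : Type*} [MeasurableSpace Ω] (P : Measure Ω) (M : ℕ)
    (X : ℕ → Ω → ℝ) : Prop :=
  ∀ k : ℕ, IndepFun (fun ω => fun i : {i : ℕ // i ≤ k} => X i.1 ω)
    (fun ω => fun i : {i : ℕ // k + M + 1 ≤ i} => X i.1 ω) P

/-- The class `D(M, q, c, σmin, C)`: `M`-dependent sequences of absolutely continuous
real random variables with density bounded by `c`, `E|X_i|^q ≤ C`, `E|X_i - μ_i|^q ≤ C`,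
and standard deviation at least `σmin`. -/
structure MemD {Ω : Type*} [MeasurableSpace Ω] (P : Measure Ω) (M : ℕ)
    (q c σmin C : ℝ) (X : ℕ → Ω → ℝ) : Prop where
  measurable : ∀ i, Measurable (X i)
  mdep : MDependent P M X
  absCont : ∀ i, Measure.map (X i) P ≪ (volume : Measure ℝ)
  density_le : ∀ i, ∀ᵐ x ∂(volume : Measure ℝ),
      (Measure.map (X i) P).rnDeriv volume x ≤ ENNReal.ofReal c
  mom_le : ∀ i, ∫⁻ ω, ENNReal.ofReal (|X i ω| ^ q) ∂P ≤ ENNReal.ofReal C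
  cmom_le : ∀ i, ∫⁻ ω, ENNReal.ofReal (|X i ω - ∫ ω', X i ω' ∂P| ^ q) ∂P ≤ ENNReal.ofReal C
  sd_ge : ∀ i, σmin ^ 2 ≤ variance (X i) P

/-- The first `p` entries of a sequence of random variables,
as a random vector in Euclidean space (indices `0, …, p-1`). -/
def vecOf {Ω : Type*} (X : ℕ → Ω → ℝ) (p : ℕ) (ω : Ω) : EuclideanSpace ℝ (Fin p) :=
  WithLp.toLp 2 (fun i : Fin p => X i.1 ω)

/-- `m` is a geometric median of the random vector `X`:
it minimizes `E‖X - m‖` over `ℝ^p` (Euclidean norm). -/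
def IsGeometricMedian {Ω : Type*} [MeasurableSpace Ω] (P : Measure Ω) {p : ℕ}
    (X : Ω → EuclideanSpace ℝ (Fin p)) (m : EuclideanSpace ℝ (Fin p)) : Prop :=
  ∀ m' : EuclideanSpace ℝ (Fin p), ∫ ω, ‖X ω - m‖ ∂P ≤ ∫ ω, ‖X ω - m'‖ ∂P

section AuxGM

variable {Ω : Type*} [MeasurableSpace Ω] {P : Measure Ω} [IsProbabilityMeasure P]

/-- A random variable with a bounded `q`-th absolute moment (`q ≥ 2`) is in `L²`. -/
lemma aux_memLp_two {Y : Ω → ℝ} {q C : ℝ} (hq : 2 ≤ q) (hY : Measurable Y)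
    (hmom : ∫⁻ ω, ENNReal.ofReal (|Y ω| ^ q) ∂P ≤ ENNReal.ofReal C) :
    MemLp Y 2 P := by
  refine ⟨hY.aestronglyMeasurable, ?_⟩
  rw [eLpNorm_eq_lintegral_rpow_enorm_toReal (by norm_num) (by norm_num)]
  have hpt : ∀ ω, (‖Y ω‖₊ : ℝ≥0∞) ^ (2 : ℝ≥0∞).toReal
      ≤ 1 + ENNReal.ofReal (|Y ω| ^ q) := by
    intro ω
    have h1 : (‖Y ω‖₊ : ℝ≥0∞) = ENNReal.ofReal |Y ω| := Real.enorm_eq_ofReal_abs _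
    have h2 : |Y ω| ^ (2 : ℝ) ≤ 1 + |Y ω| ^ q := by
      rcases le_or_gt (|Y ω|) 1 with h | h
      · have h3 := Real.rpow_le_one (abs_nonneg _) h (by norm_num : (0:ℝ) ≤ 2)
        have h4 : (0:ℝ) ≤ |Y ω| ^ q := Real.rpow_nonneg (abs_nonneg _) _
        linarith
      · have h3 := Real.rpow_le_rpow_of_exponent_le h.le hq
        linarith
    have h5 : (2 : ℝ≥0∞).toReal = (2 : ℝ) := by simp
    have h6 : ENNReal.ofReal |Y ω| ^ (2:ℝ) = ENNReal.ofReal (|Y ω| ^ (2:ℝ)) :=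
      ENNReal.ofReal_rpow_of_nonneg (abs_nonneg _) (by norm_num : (0:ℝ) ≤ 2)
    rw [h1, h5, h6]
    calc ENNReal.ofReal (|Y ω| ^ (2:ℝ)) ≤ ENNReal.ofReal (1 + |Y ω| ^ q) :=
          ENNReal.ofReal_le_ofReal h2
      _ ≤ ENNReal.ofReal 1 + ENNReal.ofReal (|Y ω| ^ q) := ENNReal.ofReal_add_le
      _ = 1 + ENNReal.ofReal (|Y ω| ^ q) := by rw [ENNReal.ofReal_one]
  have hb : ∫⁻ ω, (‖Y ω‖₊ : ℝ≥0∞) ^ (2 : ℝ≥0∞).toReal ∂P ≤ 1 + ENNReal.ofReal C := by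
    calc ∫⁻ ω, (‖Y ω‖₊ : ℝ≥0∞) ^ (2 : ℝ≥0∞).toReal ∂P
        ≤ ∫⁻ ω, (1 + ENNReal.ofReal (|Y ω| ^ q)) ∂P := lintegral_mono hpt
      _ = 1 + ∫⁻ ω, ENNReal.ofReal (|Y ω| ^ q) ∂P := by
          rw [lintegral_add_left measurable_const, lintegral_const, measure_univ, mul_one]
      _ ≤ 1 + ENNReal.ofReal C := add_le_add le_rfl hmom
  have hfin : ∫⁻ ω, (‖Y ω‖₊ : ℝ≥0∞) ^ (2 : ℝ≥0∞).toReal ∂P ≠ ⊤ :=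
    (lt_of_le_of_lt hb (by finiteness)).ne
  refine ENNReal.rpow_lt_top_of_nonneg ?_ hfin
  positivity

/-- An absolutely continuous random variable is a.s. different from any constant. -/
lemma aux_not_ae_const {Y : Ω → ℝ} (hY : Measurable Y)
    (habs : Measure.map Y P ≪ (volume : Measure ℝ)) (a : ℝ)
    (h : ∀ᵐ ω ∂P, Y ω = a) : False := by
  have h0 : Measure.map Y P {a} = 0 := habs (measure_singleton a)
  rw [Measure.map_apply hY (measurableSet_singleton a)] at h0
  have h2 : P ((Y ⁻¹' {a})ᶜ) = 0 := by
    have h3 := ae_iff.mp h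
    convert h3 using 2
    ext ω; simp
  have h1 : P (Y ⁻¹' {a}) = 1 :=
    (prob_compl_eq_zero_iff (hY (measurableSet_singleton a))).mp h2
  rw [h0] at h1
  exact one_ne_zero h1.symm

end AuxGM

/-- Existence and uniqueness of the geometric median for sequences in the class `D`,
when `p ≥ M + 2`. -/
theorem exists_unique_geometric_median
    {Ω : Type*} [MeasurableSpace Ω] (P : Measure Ω) [IsProbabilityMeasure P]
    (M : ℕ) (q c σmin C : ℝ) (hc : 0 < c) (hσ : 0 < σmin) (hq : 2 ≤ q) (hC : 1 ≤ C)
    (X : ℕ → Ω → ℝ) (hX : MemD P M q c σmin C X)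
    (p : ℕ) (hp : M + 2 ≤ p) :
    ∃! m : EuclideanSpace ℝ (Fin p), IsGeometricMedian P (vecOf X p) m := by
  classical
  have hL2 : ∀ i, MemLp (X i) 2 P := fun i => aux_memLp_two hq (hX.measurable i) (hX.mom_le i)
  have hInt : ∀ i, Integrable (X i) P := fun i => (hL2 i).integrable one_le_two
  have hVec : Integrable (vecOf X p) P := by
    have hrep : vecOf X p = fun ω => ∑ i : Fin p, X i.1 ω • (EuclideanSpace.single i (1:ℝ)) := by
      funext ω
      have key : ∀ (s : Finset (Fin p)) (j : Fin p),
          (∑ i ∈ s, X i.1 ω • EuclideanSpace.single i (1:ℝ)) j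
            = ∑ i ∈ s, X i.1 ω * (if j = i then 1 else 0) := by
        intro s
        induction s using Finset.induction with
        | empty => intro j; simp
        | insert _ _ hne ih =>
            intro j
            rw [Finset.sum_insert hne, Finset.sum_insert hne, PiLp.add_apply, PiLp.smul_apply,
              EuclideanSpace.single_apply, smul_eq_mul, ih]
      ext j
      rw [key Finset.univ j]
      simp [vecOf]
    rw [hrep]
    exact integrable_finset_sum _ fun i _ => (hInt i.1).smul_const _
  have hD : ∀ m : EuclideanSpace ℝ (Fin p), Integrable (fun ω => ‖vecOf X p ω - m‖) P :=
    fun m => (hVec.sub (integrable_const m)).norm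
  -- continuity of the objective
  have hlip : LipschitzWith 1 (fun m : EuclideanSpace ℝ (Fin p) => ∫ ω, ‖vecOf X p ω - m‖ ∂P) := by
    refine LipschitzWith.of_dist_le_mul fun m m' => ?_
    rw [NNReal.coe_one, one_mul, Real.dist_eq]
    have hpt : ∀ ω, |‖vecOf X p ω - m‖ - ‖vecOf X p ω - m'‖| ≤ dist m m' := by
      intro ω
      calc |‖vecOf X p ω - m‖ - ‖vecOf X p ω - m'‖|
          ≤ ‖(vecOf X p ω - m) - (vecOf X p ω - m')‖ := abs_norm_sub_norm_le _ _
        _ = ‖m' - m‖ := by congr 1; abel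
        _ = dist m m' := by rw [dist_eq_norm, norm_sub_rev]
    have h1 : (∫ ω, ‖vecOf X p ω - m‖ ∂P) - ∫ ω, ‖vecOf X p ω - m'‖ ∂P
        = ∫ ω, (‖vecOf X p ω - m‖ - ‖vecOf X p ω - m'‖) ∂P :=
      (integral_sub (hD m) (hD m')).symm
    rw [h1]
    calc |∫ ω, (‖vecOf X p ω - m‖ - ‖vecOf X p ω - m'‖) ∂P|
        ≤ ∫ ω, |‖vecOf X p ω - m‖ - ‖vecOf X p ω - m'‖| ∂P := by
          simpa [Real.norm_eq_abs] using
            norm_integral_le_integral_norm (fun ω => ‖vecOf X p ω - m‖ - ‖vecOf X p ω - m'‖)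
      _ ≤ ∫ _ω, dist m m' ∂P :=
          integral_mono ((hD m).sub (hD m')).abs (integrable_const _) hpt
      _ = dist m m' := by simp
  -- coercivity
  have hK : ∀ m : EuclideanSpace ℝ (Fin p),
      ‖m‖ + -(∫ ω, ‖vecOf X p ω‖ ∂P) ≤ ∫ ω, ‖vecOf X p ω - m‖ ∂P := by
    intro m
    have h1 : ∫ ω, (‖m‖ - ‖vecOf X p ω‖) ∂P ≤ ∫ ω, ‖vecOf X p ω - m‖ ∂P := by
      refine integral_mono ((integrable_const _).sub hVec.norm) (hD m) fun ω => ?_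
      calc ‖m‖ - ‖vecOf X p ω‖ ≤ ‖m - vecOf X p ω‖ := norm_sub_norm_le _ _
        _ = ‖vecOf X p ω - m‖ := norm_sub_rev _ _
    rw [integral_sub (integrable_const _) hVec.norm, integral_const, probReal_univ] at h1
    simpa [sub_eq_add_neg] using h1
  have hcoer : Tendsto (fun m : EuclideanSpace ℝ (Fin p) => ∫ ω, ‖vecOf X p ω - m‖ ∂P)
      (cocompact _) atTop :=
    tendsto_atTop_mono hK
      (tendsto_atTop_add_const_right _ _ tendsto_norm_cocompact_atTop)
  obtain ⟨m0, hm0⟩ := hlip.continuous.exists_forall_le hcoer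
  -- index constants
  have h0p : 0 < p := by omega
  have hMp : M + 1 < p := by omega
  -- independence of the first and (M+2)-th coordinates
  have hind : IndepFun (X 0) (X (M+1)) P := by
    have h := hX.mdep 0
    exact h.comp (φ := fun g : ({i : ℕ // i ≤ 0} → ℝ) => g ⟨0, le_rfl⟩)
      (ψ := fun g : ({i : ℕ // 0 + M + 1 ≤ i} → ℝ) => g ⟨M+1, by omega⟩)
      (measurable_pi_apply _) (measurable_pi_apply _)
  -- uniqueness
  have huniq : ∀ m1 m2, IsGeometricMedian P (vecOf X p) m1 →
      IsGeometricMedian P (vecOf X p) m2 → m1 = m2 := by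
    intro m1 m2 hm1 hm2
    by_contra hne
    have hdne : m1 - m2 ≠ 0 := sub_ne_zero.mpr hne
    set mid : EuclideanSpace ℝ (Fin p) := (2⁻¹ : ℝ) • (m1 + m2) with hmid_def
    have hmidpt : ∀ ω, vecOf X p ω - mid
        = (2⁻¹ : ℝ) • ((vecOf X p ω - m1) + (vecOf X p ω - m2)) := by
      intro ω
      rw [hmid_def]
      module
    set g : Ω → ℝ := fun ω =>
      (‖vecOf X p ω - m1‖ + ‖vecOf X p ω - m2‖)/2 - ‖vecOf X p ω - mid‖ with hg
    have hmnorm : ∀ ω, ‖vecOf X p ω - mid‖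
        = ‖(vecOf X p ω - m1) + (vecOf X p ω - m2)‖ / 2 := by
      intro ω
      rw [hmidpt ω, norm_smul]
      simp [Real.norm_eq_abs]
      ring
    have hgnn : 0 ≤ g := by
      intro ω
      have h2 := norm_add_le (vecOf X p ω - m1) (vecOf X p ω - m2)
      simp only [hg, Pi.zero_apply, sub_nonneg, hmnorm ω]
      linarith
    have hgint : Integrable g P := (((hD m1).add (hD m2)).div_const 2).sub (hD mid)
    have hgzero : ∫ ω, g ω ∂P = 0 := by
      have h1 : ∫ ω, g ω ∂P
          = ((∫ ω, ‖vecOf X p ω - m1‖ ∂P) + ∫ ω, ‖vecOf X p ω - m2‖ ∂P)/2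
            - ∫ ω, ‖vecOf X p ω - mid‖ ∂P := by
        have hI12 : Integrable
            (fun ω => (‖vecOf X p ω - m1‖ + ‖vecOf X p ω - m2‖)/2) P :=
          ((hD m1).add (hD m2)).div_const 2
        simp only [hg]
        rw [integral_sub hI12 (hD mid), integral_div, integral_add (hD m1) (hD m2)]
      have h2 : (∫ ω, ‖vecOf X p ω - m1‖ ∂P) = ∫ ω, ‖vecOf X p ω - m2‖ ∂P :=
        le_antisymm (hm1 m2) (hm2 m1)
      have h3 : (∫ ω, ‖vecOf X p ω - m1‖ ∂P) ≤ ∫ ω, ‖vecOf X p ω - mid‖ ∂P := hm1 mid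
      have h4 : 0 ≤ ∫ ω, g ω ∂P := integral_nonneg hgnn
      rw [h1] at h4 ⊢
      linarith
    have hae : g =ᵐ[P] 0 := (integral_eq_zero_iff_of_nonneg hgnn hgint).mp hgzero
    -- a.e. the sample lies on the line through m1 and m2
    have hray : ∀ᵐ ω ∂P, ∃ s : ℝ, vecOf X p ω = m2 + s • (m1 - m2) := by
      filter_upwards [hae] with ω hω
      have hω' : g ω = (0 : Ω → ℝ) ω := hω
      simp only [hg, Pi.zero_apply, hmnorm ω] at hω'
      have hnorm : ‖(vecOf X p ω - m1) + (vecOf X p ω - m2)‖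
          = ‖vecOf X p ω - m1‖ + ‖vecOf X p ω - m2‖ := by linarith
      have hsr : SameRay ℝ (vecOf X p ω - m1) (vecOf X p ω - m2) :=
        sameRay_iff_norm_add.mpr hnorm
      obtain ⟨w, a, b, ha, hb, hab, hu, hv⟩ := hsr.exists_eq_smul
      have hwd : (b - a) • w = m1 - m2 := by
        have h5 : (vecOf X p ω - m2) - (vecOf X p ω - m1) = m1 - m2 := by abel
        rw [← h5, hu, hv, sub_smul]
      have hba : b - a ≠ 0 := by
        intro h
        rw [h, zero_smul] at hwd
        exact hdne hwd.symm
      refine ⟨b * (b - a)⁻¹, ?_⟩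
      have hw : w = (b - a)⁻¹ • (m1 - m2) := by
        rw [← hwd, smul_smul, inv_mul_cancel₀ hba, one_smul]
      have h6 : vecOf X p ω = m2 + b • w := by
        rw [← hv]; abel
      rw [h6, hw, smul_smul]
    set i0 : Fin p := ⟨0, h0p⟩ with hi0
    set iM : Fin p := ⟨M+1, hMp⟩ with hiM
    set d : EuclideanSpace ℝ (Fin p) := m1 - m2 with hd_def
    have hcoord : ∀ᵐ ω ∂P, ∃ s : ℝ,
        X 0 ω = m2 i0 + s * d i0 ∧ X (M+1) ω = m2 iM + s * d iM := by
      filter_upwards [hray] with ω hs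
      obtain ⟨s, hs⟩ := hs
      refine ⟨s, ?_, ?_⟩
      · have h7 := congr_arg (fun z : EuclideanSpace ℝ (Fin p) => z i0) hs
        simpa [vecOf, PiLp.add_apply, PiLp.smul_apply, smul_eq_mul] using h7
      · have h7 := congr_arg (fun z : EuclideanSpace ℝ (Fin p) => z iM) hs
        simpa [vecOf, PiLp.add_apply, PiLp.smul_apply, smul_eq_mul] using h7
    by_cases hd0 : d i0 = 0
    · refine aux_not_ae_const (hX.measurable 0) (hX.absCont 0) (m2 i0) ?_
      filter_upwards [hcoord] with ω hω
      obtain ⟨s, h1, _⟩ := hω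
      rw [h1, hd0]; ring
    · set β : ℝ := d iM / d i0 with hβ_def
      set α : ℝ := m2 iM - β * m2 i0 with hα_def
      have hlin : ∀ᵐ ω ∂P, X (M+1) ω = α + β * X 0 ω := by
        filter_upwards [hcoord] with ω hω
        obtain ⟨s, h1, h2⟩ := hω
        rw [h2, hα_def, h1, hβ_def]
        field_simp
        ring
      set E0 : ℝ := ∫ ω, X 0 ω ∂P with hE0
      set E2 : ℝ := ∫ ω, X 0 ω ^ 2 ∂P with hE2
      have hsq : Integrable (fun ω => X 0 ω ^ 2) P := (hL2 0).integrable_sq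
      have hlhs : ∫ ω, X 0 ω * X (M+1) ω ∂P = α * E0 + β * E2 := by
        have hcg : (fun ω => X 0 ω * X (M+1) ω)
            =ᵐ[P] fun ω => α * X 0 ω + β * X 0 ω ^ 2 := by
          filter_upwards [hlin] with ω h
          rw [h]; ring
        rw [integral_congr_ae hcg,
          integral_add ((hInt 0).const_mul α) (hsq.const_mul β),
          integral_const_mul, integral_const_mul, hE0, hE2]
      have hrhs : ∫ ω, X (M+1) ω ∂P = α + β * E0 := by
        have hcg : (fun ω => X (M+1) ω) =ᵐ[P] fun ω => α + β * X 0 ω := hlin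
        rw [integral_congr_ae hcg,
          integral_add (integrable_const α) ((hInt 0).const_mul β),
          integral_const, integral_const_mul, hE0]
        simp
      have hmul : ∫ ω, X 0 ω * X (M+1) ω ∂P = E0 * ∫ ω, X (M+1) ω ∂P := by
        have h8 := hind.integral_mul_eq_mul_integral (hInt 0).aestronglyMeasurable
          (hInt (M+1)).aestronglyMeasurable
        simpa [Pi.mul_apply] using h8
      have hvar : variance (X 0) P = E2 - E0 ^ 2 := by
        rw [variance_eq_sub (hL2 0), hE0, hE2]
        simp only [Pi.pow_apply]
      have hβvar : β * variance (X 0) P = 0 := by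
        rw [hvar]
        have h9 : α * E0 + β * E2 = E0 * (α + β * E0) := by
          rw [← hlhs, ← hrhs, ← hmul]
        nlinarith [h9]
      have hvpos : (0:ℝ) < variance (X 0) P := lt_of_lt_of_le (by positivity) (hX.sd_ge 0)
      have hβ0 : β = 0 := by
        rcases mul_eq_zero.mp hβvar with h | h
        · exact h
        · exact absurd h hvpos.ne'
      refine aux_not_ae_const (hX.measurable (M+1)) (hX.absCont (M+1)) α ?_
      filter_upwards [hlin] with ω h
      rw [h, hβ0]; ring
  exact ⟨m0, fun m' => hm0 m', fun y hy => huniq y m0 hy (fun m' => hm0 m')⟩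
end
end

section
/- Fix an integer M ≥ 0 and reals c, σ_min > 0, q > 2, C ≥ 1, together with k > 0 and C₂ < ∞. Then there exists a finite constant β = β(k, C₂, M, q, c, σ_min, C) such that: for every sequence (Y_i)_{i∈ℕ} ∈ D(M, q, c, σ_min, C), every p ≥ ⌈4k⌉(M+1) + 1, and every vector v_p ∈ ℝ^p with ‖v_p‖² ≤ C₂ p, one has E[ ( ‖Y − v_p‖² / E‖Y − v_p‖² )^{−k} ] ≤ β, where Y := (Y_1, …, Y_p). -/
open MeasureTheory ProbabilityTheory Filter
open scoped ENNReal

noncomputable section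

open Finset Real Set

section AuxLemmas
variable {Ω : Type} [MeasurableSpace Ω] {P : Measure Ω}

lemma strided_iIndepFun {Ω : Type} [MeasurableSpace Ω] {P : Measure Ω} [IsProbabilityMeasure P]
    {M : ℕ} {Y : ℕ → Ω → ℝ}
    (hm : ∀ i, Measurable (Y i)) (hdep : MDependent P M Y) :
    iIndepFun (fun j : ℕ => Y (j * (M + 1))) P := by
  classical
  rw [iIndepFun_iff_measure_inter_preimage_eq_mul]
  intro S
  induction S using Finset.induction_on_max with
  | empty => intro sets _; simp
  | insert a s ha ih =>
    intro sets hsets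
    have hans : a ∉ s := fun h => lt_irrefl a (ha a h)
    rcases Nat.eq_zero_or_pos a with rfl | ha0
    · have hs : s = ∅ := Finset.eq_empty_of_forall_notMem fun x hx => Nat.not_lt_zero x (ha x hx)
      subst hs; simp
    · set K := (a - 1) * (M + 1) with hK
      have hle : ∀ i ∈ s, i * (M + 1) ≤ K := fun i hi =>
        Nat.mul_le_mul_right _ (by have := ha i hi; omega)
      have hKa : K + M + 1 ≤ a * (M + 1) := by
        have h1 : K + (M + 1) = a * (M + 1) := by
          rw [hK, ← Nat.succ_mul, Nat.succ_eq_add_one]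
          congr 1
          omega
        omega
      have hind : IndepFun (fun ω => fun i : {x // x ∈ s} => Y (i.1 * (M + 1)) ω)
          (fun ω => Y (a * (M + 1)) ω) P := by
        have hφ : Measurable (fun g : ({i : ℕ // i ≤ K} → ℝ) =>
            fun i : {x // x ∈ s} => g ⟨i.1 * (M + 1), hle i.1 i.2⟩) :=
          measurable_pi_lambda _ (fun i => measurable_pi_apply _)
        have hψ : Measurable (fun g : ({i : ℕ // K + M + 1 ≤ i} → ℝ) =>
            g ⟨a * (M + 1), hKa⟩) := measurable_pi_apply _
        exact (hdep K).comp hφ hψ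
      have hm1 : MeasurableSet (⋂ i : {x // x ∈ s},
          (fun g : {x // x ∈ s} → ℝ => g i) ⁻¹' sets i.1) :=
        MeasurableSet.iInter fun i =>
          measurable_pi_apply i (hsets i.1 (mem_insert_of_mem i.2))
      have key := hind.measure_inter_preimage_eq_mul
        (⋂ i : {x // x ∈ s}, (fun g : {x // x ∈ s} → ℝ => g i) ⁻¹' sets i.1)
        (sets a) hm1 (hsets a (mem_insert_self a s))
      have hpre : (fun ω => fun i : {x // x ∈ s} => Y (i.1 * (M + 1)) ω) ⁻¹'
          (⋂ i : {x // x ∈ s}, (fun g : {x // x ∈ s} → ℝ => g i) ⁻¹' sets i.1)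
          = ⋂ i ∈ s, (fun j : ℕ => Y (j * (M + 1))) i ⁻¹' sets i := by
        ext ω
        simp [Set.mem_iInter]
      rw [Finset.set_biInter_insert, Finset.prod_insert hans, Set.inter_comm, ← hpre, key, hpre,
        ih (fun i hi => hsets i (mem_insert_of_mem hi)), mul_comm]



-- change of variables to Lebesgue with density bound
lemma factor_lintegral_le [IsProbabilityMeasure P] {Z : Ω → ℝ} (hZ : Measurable Z)
    (habs : Measure.map Z P ≪ volume) {c : ℝ}
    (hd : ∀ᵐ x ∂(volume : Measure ℝ), (Measure.map Z P).rnDeriv volume x ≤ ENNReal.ofReal c)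
    {f : ℝ → ℝ≥0∞} (hf : Measurable f) :
    ∫⁻ ω, f (Z ω) ∂P ≤ ENNReal.ofReal c * ∫⁻ x, f x ∂(volume : Measure ℝ) := by
  haveI : IsProbabilityMeasure (Measure.map Z P) := Measure.isProbabilityMeasure_map hZ.aemeasurable
  rw [← lintegral_map hf hZ, ← MeasureTheory.lintegral_rnDeriv_mul habs hf.aemeasurable,
    ← lintegral_const_mul _ hf]
  refine lintegral_mono_ae ?_
  filter_upwards [hd] with x hx
  exact mul_le_mul_left hx _

lemma exp_neg_integrable {t : ℝ} (ht : 0 < t) (w : ℝ) :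
    Integrable (fun x : ℝ => Real.exp (-(t * (x - w) ^ 2))) := by
  have h := (integrable_exp_neg_mul_sq ht).comp_sub_right w
  simpa [neg_mul] using h

lemma gauss_lintegral_eq {t : ℝ} (ht : 0 < t) (w : ℝ) :
    ∫⁻ x, ENNReal.ofReal (Real.exp (-(t * (x - w) ^ 2))) ∂(volume : Measure ℝ)
      = ENNReal.ofReal (Real.sqrt (π / t)) := by
  rw [← ofReal_integral_eq_lintegral_ofReal (exp_neg_integrable ht w)
    (Filter.Eventually.of_forall fun x => (Real.exp_pos _).le)]
  congr 1
  rw [integral_sub_right_eq_self (fun x => Real.exp (-(t * x ^ 2))) w]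
  simpa [neg_mul] using integral_gaussian t

-- Bochner-integral form of mgf of the squared variable
lemma mgf_sq_eq [IsProbabilityMeasure P] {Z : Ω → ℝ} (hZ : Measurable Z) (w t : ℝ) (ht : 0 ≤ t) :
    ENNReal.ofReal (mgf (fun ω => (Z ω - w) ^ 2) P (-t))
      = ∫⁻ ω, ENNReal.ofReal (Real.exp (-(t * (Z ω - w) ^ 2))) ∂P := by
  have hint : Integrable (fun ω => Real.exp (-(t * (Z ω - w) ^ 2))) P := by
    refine (integrable_const (1 : ℝ)).mono' ?_ ?_
    · exact (((hZ.sub_const w).pow_const 2).const_mul t).neg.exp.aestronglyMeasurable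
    · filter_upwards with ω
      rw [Real.norm_eq_abs, abs_of_pos (Real.exp_pos _)]
      exact Real.exp_le_one_iff.2 (neg_nonpos.2 (by positivity))
  rw [mgf]
  rw [ofReal_integral_eq_lintegral_ofReal]
  · congr 1; ext ω; rw [neg_mul]
  · simpa [neg_mul] using hint
  · exact Filter.Eventually.of_forall fun ω => (Real.exp_pos _).le

lemma factor_gauss_bound [IsProbabilityMeasure P] {Z : Ω → ℝ} (hZ : Measurable Z)
    (habs : Measure.map Z P ≪ volume) {c : ℝ} (hc : 0 < c)
    (hd : ∀ᵐ x ∂(volume : Measure ℝ), (Measure.map Z P).rnDeriv volume x ≤ ENNReal.ofReal c)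
    (w : ℝ) {t : ℝ} (ht : 0 < t) :
    mgf (fun ω => (Z ω - w) ^ 2) P (-t) ≤ c * Real.sqrt (π / t) := by
  have key : ENNReal.ofReal (mgf (fun ω => (Z ω - w) ^ 2) P (-t))
      ≤ ENNReal.ofReal (c * Real.sqrt (π / t)) := by
    rw [mgf_sq_eq hZ w t ht.le]
    calc ∫⁻ ω, ENNReal.ofReal (Real.exp (-(t * (Z ω - w) ^ 2))) ∂P
        ≤ ENNReal.ofReal c *
          ∫⁻ x, ENNReal.ofReal (Real.exp (-(t * (x - w) ^ 2))) ∂(volume : Measure ℝ) := by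
          exact factor_lintegral_le hZ habs hd
            (ENNReal.measurable_ofReal.comp
              (((measurable_id.sub_const w).pow_const 2).const_mul t).neg.exp)
      _ = ENNReal.ofReal c * ENNReal.ofReal (Real.sqrt (π / t)) := by
          rw [gauss_lintegral_eq ht w]
      _ = ENNReal.ofReal (c * Real.sqrt (π / t)) := by
          rw [ENNReal.ofReal_mul hc.le]
  have h2 : (0:ℝ) ≤ c * Real.sqrt (π / t) := by positivity
  exact (ENNReal.ofReal_le_ofReal_iff h2).1 key



lemma factor_small_bound [IsProbabilityMeasure P] {Z : Ω → ℝ} (hZ : Measurable Z)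
    (habs : Measure.map Z P ≪ volume) {c : ℝ} (hc : 0 < c)
    (hd : ∀ᵐ x ∂(volume : Measure ℝ), (Measure.map Z P).rnDeriv volume x ≤ ENNReal.ofReal c)
    (w : ℝ) {t : ℝ} (ht : 0 ≤ t) :
    mgf (fun ω => (Z ω - w) ^ 2) P (-t)
      ≤ (1 + Real.exp (-(t * ((4 * c)⁻¹) ^ 2))) / 2 := by
  haveI : IsProbabilityMeasure (Measure.map Z P) := Measure.isProbabilityMeasure_map hZ.aemeasurable
  set δ : ℝ := (4 * c)⁻¹ with hδ
  have hδpos : 0 < δ := by positivity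
  set e : ℝ := Real.exp (-(t * δ ^ 2)) with he
  have he1 : e ≤ 1 := Real.exp_le_one_iff.2 (neg_nonpos.2 (by positivity))
  have he0 : 0 < e := Real.exp_pos _
  -- pointwise bound
  have hpt : ∀ x : ℝ, ENNReal.ofReal (Real.exp (-(t * (x - w) ^ 2)))
      ≤ (Set.Icc (w - δ) (w + δ)).indicator (fun _ => ENNReal.ofReal (1 - e)) x
        + ENNReal.ofReal e := by
    intro x
    by_cases hx : x ∈ Set.Icc (w - δ) (w + δ)
    · rw [Set.indicator_of_mem hx]
      calc ENNReal.ofReal (Real.exp (-(t * (x - w) ^ 2)))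
          ≤ ENNReal.ofReal 1 := ENNReal.ofReal_le_ofReal
            (Real.exp_le_one_iff.2 (neg_nonpos.2 (by positivity)))
        _ = ENNReal.ofReal ((1 - e) + e) := by norm_num
        _ ≤ _ := ENNReal.ofReal_add_le
    · rw [Set.indicator_of_notMem hx, zero_add]
      refine ENNReal.ofReal_le_ofReal (Real.exp_le_exp.2 ?_)
      rw [neg_le_neg_iff]
      refine mul_le_mul_of_nonneg_left ?_ ht
      have : δ ≤ |x - w| := by
        rw [Set.mem_Icc, not_and_or] at hx
        rcases hx with h | h
        · push_neg at h
          rw [abs_sub_comm]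
          calc δ ≤ w - x := by linarith
          _ ≤ |w - x| := le_abs_self _
        · push_neg at h
          calc δ ≤ x - w := by linarith
          _ ≤ |x - w| := le_abs_self _
      calc δ ^ 2 ≤ |x - w| ^ 2 := by
            exact pow_le_pow_left₀ hδpos.le this 2
        _ = (x - w) ^ 2 := sq_abs _
    -- measure bound on the interval
  have hIcc : (Measure.map Z P) (Set.Icc (w - δ) (w + δ)) ≤ ENNReal.ofReal (1 / 2) := by
    rw [← Measure.withDensity_rnDeriv_eq (Measure.map Z P) volume habs,
      withDensity_apply _ measurableSet_Icc]
    calc ∫⁻ x in Set.Icc (w - δ) (w + δ), (Measure.map Z P).rnDeriv volume x ∂volume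
        ≤ ∫⁻ _ in Set.Icc (w - δ) (w + δ), ENNReal.ofReal c ∂volume :=
          lintegral_mono_ae (ae_restrict_of_ae hd)
      _ = ENNReal.ofReal c * volume (Set.Icc (w - δ) (w + δ)) := by
          rw [setLIntegral_const]
      _ = ENNReal.ofReal (1 / 2) := by
          rw [Real.volume_Icc]
          have h2d : w + δ - (w - δ) = 2 * δ := by ring
          rw [h2d, ← ENNReal.ofReal_mul hc.le]
          congr 1
          rw [hδ]
          field_simp
          ring
  -- combine
  have key : ENNReal.ofReal (mgf (fun ω => (Z ω - w) ^ 2) P (-t))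
      ≤ ENNReal.ofReal ((1 + e) / 2) := by
    rw [mgf_sq_eq hZ w t ht]
    calc ∫⁻ ω, ENNReal.ofReal (Real.exp (-(t * (Z ω - w) ^ 2))) ∂P
        = ∫⁻ x, ENNReal.ofReal (Real.exp (-(t * (x - w) ^ 2))) ∂(Measure.map Z P) := by
          have hfm : Measurable (fun x : ℝ => ENNReal.ofReal (Real.exp (-(t * (x - w) ^ 2)))) := by
            fun_prop
          rw [lintegral_map hfm hZ]
      _ ≤ ∫⁻ x, ((Set.Icc (w - δ) (w + δ)).indicator (fun _ => ENNReal.ofReal (1 - e)) x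
            + ENNReal.ofReal e) ∂(Measure.map Z P) := lintegral_mono hpt
      _ = ENNReal.ofReal (1 - e) * (Measure.map Z P) (Set.Icc (w - δ) (w + δ))
            + ENNReal.ofReal e := by
          rw [lintegral_add_right _ measurable_const, lintegral_indicator measurableSet_Icc,
            setLIntegral_const, lintegral_const, measure_univ, mul_one]
      _ ≤ ENNReal.ofReal (1 - e) * ENNReal.ofReal (1 / 2) + ENNReal.ofReal e := by
          gcongr
      _ = ENNReal.ofReal ((1 - e) * (1 / 2) + e) := by
          rw [← ENNReal.ofReal_mul (by linarith), ← ENNReal.ofReal_add (by nlinarith) he0.le]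
      _ = ENNReal.ofReal ((1 + e) / 2) := by ring_nf
  have h2 : (0:ℝ) ≤ (1 + e) / 2 := by positivity
  exact (ENNReal.ofReal_le_ofReal_iff h2).1 key

-- elementary real inequality : (1 + exp(-u))/2 ≤ exp(-b*u) for u ∈ [0,1], b = (1-e⁻¹)/2
lemma small_exp_bound {u : ℝ} (hu0 : 0 ≤ u) (hu1 : u ≤ 1) :
    (1 + Real.exp (-u)) / 2 ≤ Real.exp (-(((1 - Real.exp (-1)) / 2) * u)) := by
  have h1 : Real.exp (-u) ≤ 1 - u * (1 - Real.exp (-1)) := by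
    have hconv := convexOn_exp.2 (Set.mem_univ (-1 : ℝ)) (Set.mem_univ (0 : ℝ))
      hu0 (by linarith : (0:ℝ) ≤ 1 - u) (by ring)
    simp only [smul_eq_mul] at hconv
    calc Real.exp (-u) = Real.exp (u * (-1) + (1 - u) * 0) := by ring_nf
      _ ≤ u * Real.exp (-1) + (1 - u) * Real.exp 0 := hconv
      _ = 1 - u * (1 - Real.exp (-1)) := by rw [Real.exp_zero]; ring
  have h2 : 1 - (((1 - Real.exp (-1)) / 2) * u) ≤ Real.exp (-(((1 - Real.exp (-1)) / 2) * u)) := by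
    have := Real.add_one_le_exp (-(((1 - Real.exp (-1)) / 2) * u))
    linarith
  calc (1 + Real.exp (-u)) / 2 ≤ (1 + (1 - u * (1 - Real.exp (-1)))) / 2 := by linarith
    _ = 1 - (((1 - Real.exp (-1)) / 2) * u) := by ring
    _ ≤ _ := h2



lemma gammaId {k : ℝ} (hk : 0 < k) {s : ℝ} (hs : 0 < s) :
    ∫⁻ t in Set.Ioi (0:ℝ), ENNReal.ofReal (t ^ (k-1) * Real.exp (-(s*t)))
      = ENNReal.ofReal (s ^ (-k) * Real.Gamma k) := by
  have hInt : IntegrableOn (fun t : ℝ => t ^ (k-1) * Real.exp (-(s*t))) (Set.Ioi 0) := by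
    have h := integrableOn_rpow_mul_exp_neg_mul_rpow (p := 1) (s := k-1) (b := s)
      (by linarith) one_pos hs
    refine h.congr_fun (fun x hx => ?_) measurableSet_Ioi
    simp only [Real.rpow_one, neg_mul]
  have hnn : 0 ≤ᵐ[volume.restrict (Set.Ioi (0:ℝ))]
      (fun t : ℝ => t ^ (k-1) * Real.exp (-(s*t))) := by
    refine (ae_restrict_iff' measurableSet_Ioi).2 (Eventually.of_forall fun t ht => ?_)
    have h0t : (0:ℝ) < t := ht
    positivity
  rw [← ofReal_integral_eq_lintegral_ofReal hInt hnn,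
    integral_rpow_mul_exp_neg_mul_Ioi hk hs]
  congr 2
  rw [one_div, Real.inv_rpow hs.le, Real.rpow_neg hs.le]

lemma inv_moment_bound [IsProbabilityMeasure P] {X : ℕ → Ω → ℝ}
    (hm : ∀ j, Measurable (X j)) (hnn : ∀ j ω, 0 ≤ X j ω)
    (hind : iIndepFun X P)
    {k a T ρ : ℝ} (hk : 0 < k) (ha : 0 < a) (hT : 0 < T) (hρ : 0 ≤ ρ)
    {n : ℕ} (hkn : 4 * k < n)
    (h1 : ∀ j < n, ∀ t : ℝ, 0 < t → t ≤ T → mgf (X j) P (-t) ≤ Real.exp (-(a * t)))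
    (h2 : ∀ j < n, ∀ t : ℝ, T ≤ t → mgf (X j) P (-t) ≤ ρ * (T / t) ^ ((1:ℝ)/2))
    (hpos : ∀ᵐ ω ∂P, 0 < ∑ j ∈ Finset.range n, X j ω) :
    ∫⁻ ω, ENNReal.ofReal ((∑ j ∈ Finset.range n, X j ω) ^ (-k)) ∂P
      ≤ ENNReal.ofReal (((n : ℝ) * a) ^ (-k)
          + T ^ k * ρ ^ n * (k * Real.Gamma k)⁻¹) := by
  have hn0 : (0:ℝ) < n := lt_trans (by positivity) hkn
  have hGamma : 0 < Real.Gamma k := Real.Gamma_pos_of_pos hk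
  set S : Ω → ℝ := fun ω => ∑ j ∈ Finset.range n, X j ω with hSdef
  have hSm : Measurable S := Finset.measurable_sum _ (fun j _ => hm j)
  have hSnn : ∀ ω, 0 ≤ S ω := fun ω => Finset.sum_nonneg fun j _ => hnn j ω
  have hSsum : S = ∑ j ∈ Finset.range n, X j := by
    ext ω; simp [hSdef, Finset.sum_apply]
  -- mgf basics
  have hmgf_nonneg : ∀ t : ℝ, 0 ≤ mgf S P (-t) := fun t => mgf_nonneg
  have hmgf_eq : ∀ t : ℝ, 0 ≤ t →
      ∫⁻ ω, ENNReal.ofReal (Real.exp (-(t * S ω))) ∂P = ENNReal.ofReal (mgf S P (-t)) := by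
    intro t ht
    have hint : Integrable (fun ω => Real.exp (-(t * S ω))) P := by
      refine (integrable_const (1:ℝ)).mono' ((hSm.const_mul t).neg.exp).aestronglyMeasurable ?_
      filter_upwards with ω
      rw [Real.norm_eq_abs, abs_of_pos (Real.exp_pos _)]
      exact Real.exp_le_one_iff.2 (by nlinarith [hSnn ω])
    have h0 : 0 ≤ᵐ[P] fun ω => Real.exp (-(t * S ω)) :=
      Eventually.of_forall fun ω => (Real.exp_pos _).le
    rw [mgf]
    simp_rw [neg_mul]
    rw [← ofReal_integral_eq_lintegral_ofReal hint h0]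
  have hprod : ∀ t : ℝ, mgf S P (-t) = ∏ j ∈ Finset.range n, mgf (X j) P (-t) := by
    intro t
    rw [hSsum]
    exact iIndepFun.mgf_sum hind hm (Finset.range n)
  -- product bounds
  have bound1 : ∀ t : ℝ, 0 < t → t ≤ T → mgf S P (-t) ≤ Real.exp (-((n:ℝ) * a * t)) := by
    intro t ht htT
    rw [hprod t]
    calc ∏ j ∈ Finset.range n, mgf (X j) P (-t)
        ≤ ∏ _j ∈ Finset.range n, Real.exp (-(a*t)) :=
          Finset.prod_le_prod (fun j _ => mgf_nonneg)
            (fun j hj => h1 j (Finset.mem_range.1 hj) t ht htT)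
      _ = Real.exp (-((n:ℝ) * a * t)) := by
          rw [Finset.prod_const, Finset.card_range, ← Real.exp_nat_mul]
          congr 1
          ring
  have bound2 : ∀ t : ℝ, T ≤ t →
      mgf S P (-t) ≤ ρ ^ n * T ^ ((n:ℝ)/2) * t ^ (-((n:ℝ)/2)) := by
    intro t htT
    have ht : 0 < t := lt_of_lt_of_le hT htT
    rw [hprod t]
    calc ∏ j ∈ Finset.range n, mgf (X j) P (-t)
        ≤ ∏ _j ∈ Finset.range n, (ρ * (T / t) ^ ((1:ℝ)/2)) :=
          Finset.prod_le_prod (fun j _ => mgf_nonneg)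
            (fun j hj => h2 j (Finset.mem_range.1 hj) t htT)
      _ = ρ ^ n * ((T / t) ^ ((1:ℝ)/2)) ^ n := by
          rw [Finset.prod_const, Finset.card_range, mul_pow]
      _ = ρ ^ n * T ^ ((n:ℝ)/2) * t ^ (-((n:ℝ)/2)) := by
          have hh : ((T / t) ^ ((1:ℝ)/2)) ^ n = (T/t) ^ ((n:ℝ)/2) := by
            rw [← Real.rpow_natCast ((T / t) ^ ((1:ℝ)/2)) n,
              ← Real.rpow_mul (by positivity : (0:ℝ) ≤ T / t)]
            congr 1
            ring
          rw [hh, Real.div_rpow hT.le ht.le, Real.rpow_neg ht.le, div_eq_mul_inv, mul_assoc]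
  -- the Gamma representation of the negative moment
  have main_eq : (∫⁻ ω, ENNReal.ofReal ((S ω) ^ (-k)) ∂P) * ENNReal.ofReal (Real.Gamma k)
      = ∫⁻ t in Set.Ioi (0:ℝ),
          ENNReal.ofReal (t ^ (k-1)) * ENNReal.ofReal (mgf S P (-t)) ∂volume := by
    rw [← lintegral_mul_const' _ _ ENNReal.ofReal_ne_top]
    have step1 : ∫⁻ ω, ENNReal.ofReal ((S ω) ^ (-k)) * ENNReal.ofReal (Real.Gamma k) ∂P
        = ∫⁻ ω, ∫⁻ t in Set.Ioi (0:ℝ),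
            ENNReal.ofReal (t ^ (k-1) * Real.exp (-(S ω * t))) ∂volume ∂P := by
      refine lintegral_congr_ae ?_
      filter_upwards [hpos] with ω hω
      have hSω : 0 < S ω := hω
      rw [← ENNReal.ofReal_mul (Real.rpow_nonneg hSω.le _), gammaId hk hSω]
    have hum : Measurable (Function.uncurry fun (ω : Ω) (t : ℝ) =>
        ENNReal.ofReal (t ^ (k-1) * Real.exp (-(S ω * t)))) := by
      apply Measurable.ennreal_ofReal
      exact ((measurable_snd.pow_const (k-1)).mul
        (((hSm.comp measurable_fst).mul measurable_snd).neg.exp))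
    have step2 : ∫⁻ ω, ∫⁻ t in Set.Ioi (0:ℝ),
          ENNReal.ofReal (t ^ (k-1) * Real.exp (-(S ω * t))) ∂volume ∂P
        = ∫⁻ t in Set.Ioi (0:ℝ), ∫⁻ ω,
            ENNReal.ofReal (t ^ (k-1) * Real.exp (-(S ω * t))) ∂P ∂volume :=
      lintegral_lintegral_swap hum.aemeasurable
    have step3 : ∫⁻ t in Set.Ioi (0:ℝ), ∫⁻ ω,
          ENNReal.ofReal (t ^ (k-1) * Real.exp (-(S ω * t))) ∂P ∂volume
        = ∫⁻ t in Set.Ioi (0:ℝ),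
            ENNReal.ofReal (t ^ (k-1)) * ENNReal.ofReal (mgf S P (-t)) ∂volume := by
      refine lintegral_congr_ae ((ae_restrict_iff' measurableSet_Ioi).2
        (Eventually.of_forall fun t ht => ?_))
      have h0t : (0:ℝ) < t := ht
      have : ∀ ω, ENNReal.ofReal (t ^ (k-1) * Real.exp (-(S ω * t)))
          = ENNReal.ofReal (t ^ (k-1)) * ENNReal.ofReal (Real.exp (-(t * S ω))) := by
        intro ω
        rw [← ENNReal.ofReal_mul (Real.rpow_nonneg h0t.le _), mul_comm (S ω) t]
      simp_rw [this]
      rw [lintegral_const_mul (f := fun ω => ENNReal.ofReal (Real.exp (-(t * S ω)))) _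
        ((hSm.const_mul t).neg.exp.ennreal_ofReal), hmgf_eq t h0t.le]
    rw [step1, step2, step3]
  -- split the t-integral
  have hsplit : ∫⁻ t in Set.Ioi (0:ℝ),
        ENNReal.ofReal (t ^ (k-1)) * ENNReal.ofReal (mgf S P (-t)) ∂volume
      = (∫⁻ t in Set.Ioc (0:ℝ) T,
          ENNReal.ofReal (t ^ (k-1)) * ENNReal.ofReal (mgf S P (-t)) ∂volume)
        + ∫⁻ t in Set.Ioi T,
            ENNReal.ofReal (t ^ (k-1)) * ENNReal.ofReal (mgf S P (-t)) ∂volume := by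
    rw [← lintegral_union measurableSet_Ioi (Set.Ioc_disjoint_Ioi le_rfl),
      Set.Ioc_union_Ioi_eq_Ioi hT.le]
  -- piece 1
  have piece1 : ∫⁻ t in Set.Ioc (0:ℝ) T,
        ENNReal.ofReal (t ^ (k-1)) * ENNReal.ofReal (mgf S P (-t)) ∂volume
      ≤ ENNReal.ofReal (((n:ℝ) * a) ^ (-k) * Real.Gamma k) := by
    have hna : 0 < (n:ℝ) * a := by positivity
    calc ∫⁻ t in Set.Ioc (0:ℝ) T,
          ENNReal.ofReal (t ^ (k-1)) * ENNReal.ofReal (mgf S P (-t)) ∂volume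
        ≤ ∫⁻ t in Set.Ioc (0:ℝ) T,
            ENNReal.ofReal (t ^ (k-1) * Real.exp (-(((n:ℝ) * a) * t))) ∂volume := by
          refine lintegral_mono_ae ((ae_restrict_iff' measurableSet_Ioc).2
            (Eventually.of_forall fun t ht => ?_))
          rw [ENNReal.ofReal_mul (Real.rpow_nonneg ht.1.le _)]
          exact mul_le_mul_right (ENNReal.ofReal_le_ofReal
            (le_trans (bound1 t ht.1 ht.2) (le_of_eq (by ring_nf)))) _
      _ ≤ ∫⁻ t in Set.Ioi (0:ℝ),
            ENNReal.ofReal (t ^ (k-1) * Real.exp (-(((n:ℝ) * a) * t))) ∂volume :=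
          lintegral_mono_set Set.Ioc_subset_Ioi_self
      _ = ENNReal.ofReal (((n:ℝ) * a) ^ (-k) * Real.Gamma k) := gammaId hk hna
  -- piece 2
  have hexp_lt : k - 1 - (n:ℝ)/2 < -1 := by linarith
  have piece2 : ∫⁻ t in Set.Ioi T,
        ENNReal.ofReal (t ^ (k-1)) * ENNReal.ofReal (mgf S P (-t)) ∂volume
      ≤ ENNReal.ofReal (ρ ^ n * T ^ ((n:ℝ)/2)
          * (T ^ (k - (n:ℝ)/2) / ((n:ℝ)/2 - k))) := by
    have tail_nn : 0 ≤ᵐ[volume.restrict (Set.Ioi T)] fun t : ℝ => t ^ (k - 1 - (n:ℝ)/2) := by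
      refine (ae_restrict_iff' measurableSet_Ioi).2 (Eventually.of_forall fun t ht => ?_)
      have h0t : (0:ℝ) < t := lt_trans hT ht
      positivity
    have tail_eq : ∫⁻ t in Set.Ioi T, ENNReal.ofReal (t ^ (k - 1 - (n:ℝ)/2)) ∂volume
        = ENNReal.ofReal (T ^ (k - (n:ℝ)/2) / ((n:ℝ)/2 - k)) := by
      rw [← ofReal_integral_eq_lintegral_ofReal (integrableOn_Ioi_rpow_of_lt hexp_lt hT) tail_nn,
        integral_Ioi_rpow_of_lt hexp_lt hT]
      congr 1
      rw [show k - 1 - (n:ℝ)/2 + 1 = k - (n:ℝ)/2 by ring,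
        show k - (n:ℝ)/2 = -((n:ℝ)/2 - k) by ring, div_neg, neg_div, neg_neg]
    calc ∫⁻ t in Set.Ioi T,
          ENNReal.ofReal (t ^ (k-1)) * ENNReal.ofReal (mgf S P (-t)) ∂volume
        ≤ ∫⁻ t in Set.Ioi T,
            ENNReal.ofReal (ρ ^ n * T ^ ((n:ℝ)/2)) * ENNReal.ofReal (t ^ (k - 1 - (n:ℝ)/2)) ∂volume := by
          refine lintegral_mono_ae ((ae_restrict_iff' measurableSet_Ioi).2
            (Eventually.of_forall fun t ht => ?_))
          have h0t : (0:ℝ) < t := lt_trans hT ht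
          calc ENNReal.ofReal (t ^ (k-1)) * ENNReal.ofReal (mgf S P (-t))
              ≤ ENNReal.ofReal (t ^ (k-1))
                * ENNReal.ofReal (ρ ^ n * T ^ ((n:ℝ)/2) * t ^ (-((n:ℝ)/2))) :=
                mul_le_mul_right (ENNReal.ofReal_le_ofReal (bound2 t ht.le)) _
            _ = ENNReal.ofReal (ρ ^ n * T ^ ((n:ℝ)/2)) * ENNReal.ofReal (t ^ (k - 1 - (n:ℝ)/2)) := by
                rw [← ENNReal.ofReal_mul (Real.rpow_nonneg h0t.le _),
                  ← ENNReal.ofReal_mul (by positivity)]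
                congr 1
                rw [show k - 1 - (n:ℝ)/2 = (k-1) + (-((n:ℝ)/2)) by ring,
                  Real.rpow_add h0t]
                ring
      _ = ENNReal.ofReal (ρ ^ n * T ^ ((n:ℝ)/2))
            * ENNReal.ofReal (T ^ (k - (n:ℝ)/2) / ((n:ℝ)/2 - k)) := by
          have hms : Measurable (fun t : ℝ => ENNReal.ofReal (t ^ (k - 1 - (n:ℝ)/2))) :=
            (measurable_id'.pow_const _).ennreal_ofReal
          rw [lintegral_const_mul _ hms, tail_eq]
      _ = ENNReal.ofReal (ρ ^ n * T ^ ((n:ℝ)/2) * (T ^ (k - (n:ℝ)/2) / ((n:ℝ)/2 - k))) := by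
          rw [← ENNReal.ofReal_mul (by positivity)]
  -- assemble
  have hden : 0 < (n:ℝ)/2 - k := by linarith
  have hfinal : (∫⁻ ω, ENNReal.ofReal ((S ω) ^ (-k)) ∂P) * ENNReal.ofReal (Real.Gamma k)
      ≤ ENNReal.ofReal (((n:ℝ) * a) ^ (-k) * Real.Gamma k
          + ρ ^ n * T ^ ((n:ℝ)/2) * (T ^ (k - (n:ℝ)/2) / ((n:ℝ)/2 - k))) := by
    rw [main_eq, hsplit, ENNReal.ofReal_add (by positivity)
      (mul_nonneg (by positivity) (div_nonneg (Real.rpow_nonneg hT.le _) hden.le))]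
    exact add_le_add piece1 piece2
  have hJ : ∫⁻ ω, ENNReal.ofReal ((S ω) ^ (-k)) ∂P
      ≤ ENNReal.ofReal ((((n:ℝ) * a) ^ (-k) * Real.Gamma k
          + ρ ^ n * T ^ ((n:ℝ)/2) * (T ^ (k - (n:ℝ)/2) / ((n:ℝ)/2 - k))) / Real.Gamma k) := by
    rw [ENNReal.ofReal_div_of_pos hGamma]
    rw [ENNReal.le_div_iff_mul_le (Or.inl (ENNReal.ofReal_pos.2 hGamma).ne')
      (Or.inl ENNReal.ofReal_ne_top)]
    exact hfinal
  refine le_trans hJ (ENNReal.ofReal_le_ofReal ?_)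
  -- real arithmetic
  have h2k : k < (n:ℝ)/2 - k := by linarith
  rw [add_div]
  have e1 : ((n:ℝ) * a) ^ (-k) * Real.Gamma k / Real.Gamma k = ((n:ℝ) * a) ^ (-k) := by
    field_simp
  have e2 : ρ ^ n * T ^ ((n:ℝ)/2) * (T ^ (k - (n:ℝ)/2) / ((n:ℝ)/2 - k)) / Real.Gamma k
      ≤ T ^ k * ρ ^ n * (k * Real.Gamma k)⁻¹ := by
    have hTk : T ^ ((n:ℝ)/2) * T ^ (k - (n:ℝ)/2) = T ^ k := by
      rw [← Real.rpow_add hT]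
      congr 1
      ring
    have lhs_eq : ρ ^ n * T ^ ((n:ℝ)/2) * (T ^ (k - (n:ℝ)/2) / ((n:ℝ)/2 - k)) / Real.Gamma k
        = T ^ k * ρ ^ n * (((n:ℝ)/2 - k) * Real.Gamma k)⁻¹ := by
      rw [← hTk]
      field_simp
    rw [lhs_eq]
    apply mul_le_mul_of_nonneg_left _ (by positivity)
    apply inv_anti₀ (by positivity)
    apply mul_le_mul_of_nonneg_right (le_of_lt h2k) hGamma.le
  calc ((n:ℝ) * a) ^ (-k) * Real.Gamma k / Real.Gamma k
        + ρ ^ n * T ^ ((n:ℝ)/2) * (T ^ (k - (n:ℝ)/2) / ((n:ℝ)/2 - k)) / Real.Gamma k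
      ≤ ((n:ℝ) * a) ^ (-k) + T ^ k * ρ ^ n * (k * Real.Gamma k)⁻¹ := by
        rw [e1]; exact add_le_add le_rfl e2



lemma pow_mul_exp_le {k L : ℝ} (hk : 0 < k) (hL : 0 < L) {n : ℕ} (hn : 1 ≤ n) :
    (n:ℝ) ^ k * Real.exp (-L) ^ n ≤ ((Nat.ceil k).factorial : ℝ) / L ^ (Nat.ceil k) := by
  set m := Nat.ceil k with hm
  have hn1 : (1:ℝ) ≤ (n:ℝ) := by exact_mod_cast hn
  have hnpos : (0:ℝ) < n := by linarith
  have h1 : (n:ℝ) ^ k ≤ (n:ℝ) ^ m := by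
    rw [← Real.rpow_natCast (n:ℝ) m]
    exact Real.rpow_le_rpow_of_exponent_le hn1 (Nat.le_ceil k)
  have h2 : Real.exp (-L) ^ n = (Real.exp (L * n))⁻¹ := by
    rw [← Real.exp_nat_mul, ← Real.exp_neg]
    congr 1
    ring
  have hx : (0:ℝ) < L * n := by positivity
  have hsum : (L*(n:ℝ))^m / (m.factorial : ℝ) ≤ Real.exp (L*(n:ℝ)) := by
    calc (L*(n:ℝ))^m / (m.factorial : ℝ)
        ≤ ∑ i ∈ Finset.range (m+1), (L*(n:ℝ))^i / (i.factorial : ℝ) :=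
          Finset.single_le_sum (f := fun i => (L*(n:ℝ))^i / (i.factorial : ℝ))
            (fun i _ => by positivity) (Finset.self_mem_range_succ m)
      _ ≤ Real.exp (L*(n:ℝ)) := Real.sum_le_exp_of_nonneg hx.le _
  have hinv : (Real.exp (L*(n:ℝ)))⁻¹ ≤ (m.factorial : ℝ) / (L*(n:ℝ))^m := by
    have h := inv_anti₀ (by positivity : (0:ℝ) < (L*(n:ℝ))^m / (m.factorial : ℝ)) hsum
    rwa [inv_div] at h
  calc (n:ℝ) ^ k * Real.exp (-L) ^ n
      ≤ (n:ℝ) ^ m * ((m.factorial : ℝ) / (L*(n:ℝ))^m) := by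
        rw [h2]
        exact mul_le_mul h1 hinv (by positivity) (by positivity)
    _ = (m.factorial : ℝ) / L ^ m := by
        rw [mul_pow]
        field_simp

end AuxLemmas

set_option maxHeartbeats 2000000 in
/-- Uniform inverse-moment bound: there is a finite constant `β` depending only on
`k, C₂` and the `D`-class parameters such that for all `(Y_i) ∈ D`, all
`p ≥ ⌈4k⌉(M+1) + 1` and all `v` with `‖v‖² ≤ C₂ p`,
`E[(‖Y - v‖²/E‖Y - v‖²)^{-k}] ≤ β`. -/
theorem uniform_inverse_moment_bound
    (M : ℕ) (q c σmin C : ℝ) (hc : 0 < c) (hσ : 0 < σmin) (hq : 2 < q) (hC : 1 ≤ C)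
    (k : ℝ) (hk : 0 < k) (C₂ : ℝ) :
    ∃ β : ℝ,
      ∀ (Ω : Type) [MeasurableSpace Ω] (P : Measure Ω), IsProbabilityMeasure P →
        ∀ Y : ℕ → Ω → ℝ, MemD P M q c σmin C Y →
          ∀ p : ℕ, Nat.ceil (4 * k) * (M + 1) + 1 ≤ p →
            ∀ v : EuclideanSpace ℝ (Fin p), ‖v‖ ^ 2 ≤ C₂ * p →
              ∫⁻ ω, ENNReal.ofReal
                  ((‖vecOf Y p ω - v‖ ^ 2 / ∫ ω', ‖vecOf Y p ω' - v‖ ^ 2 ∂P) ^ (-k)) ∂P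
                ≤ ENNReal.ofReal β := by
  classical
  set δ : ℝ := (4*c)⁻¹ with hδdef
  have hδpos : 0 < δ := by positivity
  set s₀ : ℝ := δ ^ 2 with hs0def
  have hs0pos : 0 < s₀ := by positivity
  set T : ℝ := s₀⁻¹ with hTdef
  have hTpos : 0 < T := by positivity
  set b : ℝ := (1 - Real.exp (-1)) / 2 with hbdef
  have hbpos : 0 < b := by
    have h := Real.exp_lt_one_iff.2 (by norm_num : (-1:ℝ) < 0)
    rw [hbdef]; linarith
  set a : ℝ := b * s₀ with hadef
  have hapos : 0 < a := by positivity
  set ρ : ℝ := Real.sqrt π / 4 with hρdef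
  have hsqrtπ : 0 < Real.sqrt π := Real.sqrt_pos.2 Real.pi_pos
  have hρpos : 0 < ρ := by rw [hρdef]; positivity
  have hρlt1 : ρ < 1 := by
    rw [hρdef, div_lt_one (by norm_num : (0:ℝ) < 4)]
    rw [show (4:ℝ) = Real.sqrt 16 by
      rw [show (16:ℝ) = 4^2 by norm_num, Real.sqrt_sq (by norm_num : (0:ℝ) ≤ 4)]]
    exact Real.sqrt_lt_sqrt Real.pi_pos.le (by nlinarith [Real.pi_lt_d2])
  set L : ℝ := -Real.log ρ with hLdef
  have hLpos : 0 < L := by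
    rw [hLdef]; have := Real.log_neg hρpos hρlt1; linarith
  have hρexp : ρ = Real.exp (-L) := by
    rw [hLdef, neg_neg, Real.exp_log hρpos]
  set m : ℕ := Nat.ceil k with hmdef
  set B : ℝ := (m.factorial : ℝ) / L ^ m with hBdef
  have hBpos : 0 < B := by rw [hBdef]; positivity
  have hGamma : 0 < Real.Gamma k := Real.Gamma_pos_of_pos hk
  have hkG : (0:ℝ) ≤ (k * Real.Gamma k)⁻¹ := inv_nonneg.2 (mul_nonneg hk.le hGamma.le)
  set A : ℝ := 2 + 2*C + 2*(max C₂ 0) with hAdef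
  have hApos : 0 < A := by
    have h0 : (0:ℝ) ≤ max C₂ 0 := le_max_right _ _
    rw [hAdef]; linarith
  refine ⟨(A*(M+1)/a)^k + (A*(M+1)*T)^k * B * (k * Real.Gamma k)⁻¹, ?_⟩
  intro Ω _ P hP Y hY p hp v hv
  haveI := hP
  -- index bookkeeping
  obtain ⟨Q, hQ⟩ : ∃ Q, Nat.ceil (4*k) * (M+1) = Q := ⟨_, rfl⟩
  rw [hQ] at hp
  obtain ⟨R, hR⟩ : ∃ R, (p-1)/(M+1) = R := ⟨_, rfl⟩
  set n : ℕ := R + 1 with hndef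
  have hp1 : 1 ≤ p := le_trans (Nat.le_add_left 1 Q) hp
  have hpR : (0:ℝ) < p := by exact_mod_cast hp1
  have hceil : Nat.ceil (4*k) ≤ R := by
    rw [← hR, Nat.le_div_iff_mul_le (Nat.succ_pos M), hQ]
    omega
  have hjlt : ∀ j, j < n → j*(M+1) < p := by
    intro j hj
    have hj' : j ≤ R := by omega
    have h1 : j * (M+1) ≤ R * (M+1) := Nat.mul_le_mul_right _ hj'
    have h2 : R * (M+1) ≤ p - 1 := by rw [← hR]; exact Nat.div_mul_le_self _ _
    omega
  have hpn : p ≤ n * (M+1) := by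
    obtain ⟨E, hE⟩ : ∃ E, (M+1) * R = E := ⟨_, rfl⟩
    obtain ⟨r, hr1, hr2⟩ : ∃ r, (M+1) * R + r = p - 1 ∧ r < M + 1 := by
      refine ⟨(p-1) % (M+1), ?_, Nat.mod_lt _ (Nat.succ_pos M)⟩
      rw [← hR]; exact Nat.div_add_mod _ _
    have hgoal : n * (M+1) = (M+1) * R + (M+1) := by rw [hndef]; ring
    rw [hgoal, hE]
    rw [hE] at hr1
    omega
  have hn4k : 4*k < (n:ℝ) := by
    have h1 : 4*k ≤ (Nat.ceil (4*k) : ℝ) := Nat.le_ceil _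
    have h2 : (Nat.ceil (4*k) : ℝ) ≤ (R:ℝ) := by exact_mod_cast hceil
    have h3 : (R:ℝ) < (n:ℝ) := by rw [hndef]; push_cast; linarith
    linarith
  have hn1 : 1 ≤ n := by omega
  have hpnR : (p:ℝ) ≤ (n:ℝ) * ((M:ℝ)+1) := by exact_mod_cast hpn
  -- random variables
  set w : ℕ → ℝ := fun i => if h : i < p then v ⟨i, h⟩ else 0 with hwdef
  set X : ℕ → Ω → ℝ := fun j ω => (Y (j*(M+1)) ω - w (j*(M+1)))^2 with hXdef
  have hXm : ∀ j, Measurable (X j) := fun j => ((hY.measurable _).sub_const _).pow_const 2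
  have hXnn : ∀ (j:ℕ) (ω:Ω), 0 ≤ X j ω := fun j ω => sq_nonneg _
  have hXind : iIndepFun X P := by
    have h0 := strided_iIndepFun (P := P) (M := M) (Y := Y) hY.measurable hY.mdep
    exact h0.comp (fun j (y:ℝ) => (y - w (j*(M+1)))^2)
      (fun j => (measurable_id.sub_const _).pow_const 2)
  -- factor bounds
  have h1 : ∀ (j:ℕ), ∀ t : ℝ, 0 < t → t ≤ T → mgf (X j) P (-t) ≤ Real.exp (-(a*t)) := by
    intro j t ht htT
    have hb1 := factor_small_bound (hY.measurable (j*(M+1))) (hY.absCont _) hc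
      (hY.density_le _) (w (j*(M+1))) ht.le
    have heq : ((4*c)⁻¹:ℝ)^2 = s₀ := rfl
    rw [heq] at hb1
    have hu0 : 0 ≤ t * s₀ := by positivity
    have hu1 : t * s₀ ≤ 1 := by
      have h2 : t ≤ s₀⁻¹ := htT
      calc t * s₀ ≤ s₀⁻¹ * s₀ := by nlinarith
        _ = 1 := inv_mul_cancel₀ hs0pos.ne'
    calc mgf (X j) P (-t) ≤ (1 + Real.exp (-(t * s₀)))/2 := hb1
      _ ≤ Real.exp (-(((1 - Real.exp (-1)) / 2) * (t * s₀))) := small_exp_bound hu0 hu1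
      _ = Real.exp (-(a*t)) := by
          rw [hadef, hbdef]
          congr 1
          ring
  have h2 : ∀ (j:ℕ), ∀ t : ℝ, T ≤ t → mgf (X j) P (-t) ≤ ρ * (T/t)^((1:ℝ)/2) := by
    intro j t htT
    have ht : 0 < t := lt_of_lt_of_le hTpos htT
    have hg := factor_gauss_bound (hY.measurable (j*(M+1))) (hY.absCont _) hc
      (hY.density_le _) (w (j*(M+1))) ht
    refine le_trans hg (le_of_eq ?_)
    rw [← Real.sqrt_eq_rpow, Real.sqrt_div hTpos.le t, Real.sqrt_div Real.pi_pos.le t]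
    have hsT : Real.sqrt T = 4*c := by
      rw [hTdef, hs0def, hδdef, show (((4*c)⁻¹:ℝ)^2)⁻¹ = (4*c)^2 by
        rw [← inv_pow, inv_inv]]
      exact Real.sqrt_sq (by positivity)
    rw [hρdef, hsT]
    have hst : 0 < Real.sqrt t := Real.sqrt_pos.2 ht
    field_simp
  -- a.e. positivity
  have hpos : ∀ᵐ ω ∂P, 0 < ∑ j ∈ Finset.range n, X j ω := by
    have h0 : P (Y 0 ⁻¹' {w 0}) = 0 := by
      rw [← Measure.map_apply (hY.measurable 0) (measurableSet_singleton _)]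
      exact (hY.absCont 0) (Real.volume_singleton)
    have hae : ∀ᵐ ω ∂P, Y 0 ω ≠ w 0 := by
      rw [ae_iff]
      convert h0 using 2
      ext ω
      simp
    filter_upwards [hae] with ω hω
    refine Finset.sum_pos' (fun j _ => hXnn j ω) ⟨0, Finset.mem_range.2 (by omega), ?_⟩
    have hX0 : X 0 ω = (Y 0 ω - w 0)^2 := by rw [hXdef]; norm_num
    rw [hX0]
    exact pow_two_pos_of_ne_zero (sub_ne_zero.2 hω)
  -- the inverse moment bound
  have hJ := inv_moment_bound hXm hXnn hXind hk hapos hTpos hρpos.le hn4k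
    (fun j _ t ht htT => h1 j t ht htT) (fun j _ t htT => h2 j t htT) hpos
  -- identification of the norm
  have hDrw : ∀ ω, ‖vecOf Y p ω - v‖^2 = ∑ i ∈ Finset.range p, (Y i ω - w i)^2 := by
    intro ω
    rw [EuclideanSpace.norm_eq, Real.sq_sqrt (Finset.sum_nonneg fun i _ => by positivity),
      ← Fin.sum_univ_eq_sum_range (fun i => (Y i ω - w i)^2) p]
    refine Finset.sum_congr rfl fun i _ => ?_
    have hwi : w i.1 = v i := by rw [hwdef]; simp [i.isLt]
    simp [PiLp.sub_apply, vecOf, Real.norm_eq_abs, sq_abs, hwi]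
  have hy2 : ∀ y : ℝ, y^2 ≤ 1 + |y|^q := by
    intro y
    rcases le_or_gt (|y|) 1 with hy | hy
    · have h1' : y^2 ≤ 1 := by nlinarith [abs_nonneg y, sq_abs y]
      have h0 : (0:ℝ) ≤ |y|^q := Real.rpow_nonneg (abs_nonneg y) q
      linarith
    · have h2q : |y|^((2:ℕ):ℝ) ≤ |y|^q := Real.rpow_le_rpow_of_exponent_le hy.le (by push_cast; linarith)
      rw [Real.rpow_natCast] at h2q
      calc y^2 = |y|^2 := (sq_abs y).symm
        _ ≤ |y|^q := h2q
        _ ≤ 1 + |y|^q := by linarith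
  have hvnorm : ∑ i ∈ Finset.range p, (w i)^2 = ‖v‖^2 := by
    rw [EuclideanSpace.norm_eq, Real.sq_sqrt (Finset.sum_nonneg fun i _ => by positivity),
      ← Fin.sum_univ_eq_sum_range (fun i => (w i)^2) p]
    refine Finset.sum_congr rfl fun i _ => ?_
    have hwi : w i.1 = v i := by rw [hwdef]; simp [i.isLt]
    simp [Real.norm_eq_abs, sq_abs, hwi]
  have hSD : ∀ ω, (∑ j ∈ Finset.range n, X j ω) ≤ ∑ i ∈ Finset.range p, (Y i ω - w i)^2 := by
    intro ω
    have himg : ∑ j ∈ Finset.range n, X j ω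
        = ∑ i ∈ (Finset.range n).image (fun j => j*(M+1)), (Y i ω - w i)^2 := by
      rw [Finset.sum_image (fun x _ y _ h => Nat.eq_of_mul_eq_mul_right (Nat.succ_pos M) h)]
    rw [himg]
    refine Finset.sum_le_sum_of_subset_of_nonneg ?_ (fun i _ _ => by positivity)
    intro i hi
    simp only [Finset.mem_image, Finset.mem_range] at hi ⊢
    obtain ⟨j, hj, rfl⟩ := hi
    exact hjlt j hj
  -- expectation bound
  have hDmeas : Measurable (fun ω => ‖vecOf Y p ω - v‖^2) := by
    have he : (fun ω => ‖vecOf Y p ω - v‖^2)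
        = fun ω => ∑ i ∈ Finset.range p, (Y i ω - w i)^2 := funext hDrw
    rw [he]
    exact Finset.measurable_sum _ (fun i _ => ((hY.measurable i).sub_const _).pow_const 2)
  set ED : ℝ := ∫ ω', ‖vecOf Y p ω' - v‖^2 ∂P with hEDdef
  have hEDnn : 0 ≤ ED := integral_nonneg fun ω => by positivity
  have hEDle : ED ≤ A * p := by
    have hup : ∫⁻ ω, ENNReal.ofReal (‖vecOf Y p ω - v‖^2) ∂P ≤ ENNReal.ofReal (A*p) := by
      calc ∫⁻ ω, ENNReal.ofReal (‖vecOf Y p ω - v‖^2) ∂P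
          = ∑ i ∈ Finset.range p, ∫⁻ ω, ENNReal.ofReal ((Y i ω - w i)^2) ∂P := by
            rw [← lintegral_finset_sum _ (fun i _ =>
              (((hY.measurable i).sub_const _).pow_const 2).ennreal_ofReal)]
            refine lintegral_congr fun ω => ?_
            rw [hDrw ω, ENNReal.ofReal_sum_of_nonneg (fun i _ => by positivity)]
        _ ≤ ∑ i ∈ Finset.range p,
              (ENNReal.ofReal (2 + 2*(w i)^2) + ENNReal.ofReal 2 * ENNReal.ofReal C) := by
            refine Finset.sum_le_sum fun i _ => ?_
            calc ∫⁻ ω, ENNReal.ofReal ((Y i ω - w i)^2) ∂P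
                ≤ ∫⁻ ω, (ENNReal.ofReal (2 + 2*(w i)^2)
                    + ENNReal.ofReal 2 * ENNReal.ofReal (|Y i ω|^q)) ∂P := by
                  refine lintegral_mono fun ω => ?_
                  have hyq := hy2 (Y i ω)
                  have hq0 : (0:ℝ) ≤ |Y i ω|^q := Real.rpow_nonneg (abs_nonneg _) q
                  have hsq : (Y i ω - w i)^2 ≤ (2 + 2*(w i)^2) + 2*(|Y i ω|^q) := by
                    nlinarith [sq_nonneg (Y i ω + w i)]
                  calc ENNReal.ofReal ((Y i ω - w i)^2)
                      ≤ ENNReal.ofReal ((2 + 2*(w i)^2) + 2*(|Y i ω|^q)) :=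
                        ENNReal.ofReal_le_ofReal hsq
                    _ ≤ ENNReal.ofReal (2 + 2*(w i)^2) + ENNReal.ofReal (2*(|Y i ω|^q)) :=
                        ENNReal.ofReal_add_le
                    _ = ENNReal.ofReal (2 + 2*(w i)^2)
                        + ENNReal.ofReal 2 * ENNReal.ofReal (|Y i ω|^q) := by
                        rw [ENNReal.ofReal_mul (by norm_num)]
              _ = ENNReal.ofReal (2 + 2*(w i)^2)
                    + ENNReal.ofReal 2 * ∫⁻ ω, ENNReal.ofReal (|Y i ω|^q) ∂P := by
                  rw [lintegral_add_left measurable_const,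
                    lintegral_const_mul _ ((hY.measurable i).abs.pow_const q).ennreal_ofReal,
                    lintegral_const, measure_univ, mul_one]
              _ ≤ ENNReal.ofReal (2 + 2*(w i)^2) + ENNReal.ofReal 2 * ENNReal.ofReal C := by
                  gcongr
                  exact hY.mom_le i
        _ ≤ ENNReal.ofReal (A*p) := by
            rw [Finset.sum_add_distrib, Finset.sum_const, Finset.card_range,
              ← ENNReal.ofReal_sum_of_nonneg (fun i _ => by positivity)]
            have hsum2 : ∑ i ∈ Finset.range p, (2 + 2*(w i)^2) = 2*p + 2*‖v‖^2 := by
              rw [Finset.sum_add_distrib, Finset.sum_const, Finset.card_range,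
                ← Finset.mul_sum, hvnorm]
              push_cast
              ring
            rw [hsum2, nsmul_eq_mul, ← ENNReal.ofReal_natCast p,
              ← ENNReal.ofReal_mul (by norm_num : (0:ℝ) ≤ 2),
              ← ENNReal.ofReal_mul (by positivity : (0:ℝ) ≤ (p:ℝ)),
              ← ENNReal.ofReal_add (by positivity) (by positivity)]
            refine ENNReal.ofReal_le_ofReal ?_
            have hvC : ‖v‖^2 ≤ max C₂ 0 * p := le_trans hv
              (mul_le_mul_of_nonneg_right (le_max_left _ _) hpR.le)
            rw [hAdef]
            nlinarith [hpR.le]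
    have heq := integral_eq_lintegral_of_nonneg_ae (μ := P)
      (Eventually.of_forall (fun ω => by positivity : ∀ ω, 0 ≤ ‖vecOf Y p ω - v‖^2))
      hDmeas.aestronglyMeasurable
    rw [hEDdef, heq]
    exact ENNReal.toReal_le_of_le_ofReal (by positivity) hup
  -- final assembly
  rcases eq_or_lt_of_le hEDnn with hED0 | hEDpos
  · have hzero : ∀ ω:Ω, ((‖vecOf Y p ω - v‖^2 / ED) ^ (-k)) = 0 := by
      intro ω
      rw [← hED0, div_zero, Real.zero_rpow (neg_ne_zero.2 hk.ne')]
    simp only [hzero, ENNReal.ofReal_zero, lintegral_zero]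
    exact zero_le
  · have hAp : 0 < A * p := by positivity
    have hnB : (n:ℝ)^k * ρ^n ≤ B := by
      rw [hρexp, hBdef]
      exact pow_mul_exp_le hk hLpos hn1
    have harith : (A*p)^k * (((n:ℝ)*a)^(-k) + T^k*ρ^n*(k*Real.Gamma k)⁻¹)
        ≤ (A*(M+1)/a)^k + (A*(M+1)*T)^k * B * (k * Real.Gamma k)⁻¹ := by
      rw [mul_add]
      refine add_le_add ?_ ?_
      · have e1 : (A*(p:ℝ))^k * (((n:ℝ)*a)^(-k)) = ((A*p)/((n:ℝ)*a))^k := by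
          rw [Real.div_rpow (by positivity) (by positivity),
            Real.rpow_neg (by positivity), div_eq_mul_inv]
        rw [e1]
        refine Real.rpow_le_rpow (by positivity) ?_ hk.le
        rw [div_le_div_iff₀ (by positivity) hapos]
        nlinarith [mul_le_mul_of_nonneg_left hpnR (mul_nonneg hApos.le hapos.le)]
      · calc (A*(p:ℝ))^k * (T^k*ρ^n*(k*Real.Gamma k)⁻¹)
            ≤ (A*((M:ℝ)+1)*(n:ℝ))^k * (T^k*ρ^n*(k*Real.Gamma k)⁻¹) := by
              refine mul_le_mul_of_nonneg_right
                (Real.rpow_le_rpow (by positivity)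
                  (by nlinarith [mul_le_mul_of_nonneg_left hpnR hApos.le]) hk.le) ?_
              have h0 : (0:ℝ) ≤ ρ^n := by positivity
              have h1' : (0:ℝ) ≤ T^k := Real.rpow_nonneg hTpos.le k
              positivity
          _ = ((A*((M:ℝ)+1))^k * T^k) * (((n:ℝ)^k * ρ^n) * (k*Real.Gamma k)⁻¹) := by
              rw [Real.mul_rpow (by positivity) (by positivity)]
              ring
          _ ≤ ((A*((M:ℝ)+1))^k * T^k) * (B * (k*Real.Gamma k)⁻¹) := by
              refine mul_le_mul_of_nonneg_left
                (mul_le_mul_of_nonneg_right hnB hkG) ?_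
              have h1' : (0:ℝ) ≤ T^k := Real.rpow_nonneg hTpos.le k
              positivity
          _ = (A*((M:ℝ)+1)*T)^k * B * (k * Real.Gamma k)⁻¹ := by
              rw [← Real.mul_rpow (by positivity) hTpos.le]
              ring
    have hSmeas : Measurable (fun ω =>
        ENNReal.ofReal ((∑ j ∈ Finset.range n, X j ω) ^ (-k))) :=
      ((Finset.measurable_sum _ fun j _ => hXm j).pow_const (-k)).ennreal_ofReal
    have hptwise : ∀ᵐ ω ∂P, ENNReal.ofReal ((‖vecOf Y p ω - v‖^2 / ED) ^ (-k))
        ≤ ENNReal.ofReal ((A*p)^k)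
          * ENNReal.ofReal ((∑ j ∈ Finset.range n, X j ω) ^ (-k)) := by
      filter_upwards [hpos] with ω hω
      have hDge : (∑ j ∈ Finset.range n, X j ω) ≤ ‖vecOf Y p ω - v‖^2 := by
        rw [hDrw ω]; exact hSD ω
      have hratio : (∑ j ∈ Finset.range n, X j ω) / (A*p) ≤ ‖vecOf Y p ω - v‖^2 / ED :=
        div_le_div₀ (by positivity) hDge hEDpos hEDle
      have h1' : (‖vecOf Y p ω - v‖^2 / ED) ^ (-k)
          ≤ ((∑ j ∈ Finset.range n, X j ω) / (A*p)) ^ (-k) :=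
        Real.rpow_le_rpow_of_nonpos (by positivity) hratio (neg_nonpos.2 hk.le)
      have h2' : ((∑ j ∈ Finset.range n, X j ω) / (A*p)) ^ (-k)
          = (A*p)^k * (∑ j ∈ Finset.range n, X j ω) ^ (-k) := by
        rw [Real.div_rpow hω.le hAp.le, Real.rpow_neg hAp.le, div_eq_mul_inv, inv_inv, mul_comm]
      rw [h2'] at h1'
      calc ENNReal.ofReal ((‖vecOf Y p ω - v‖^2 / ED) ^ (-k))
          ≤ ENNReal.ofReal ((A*p)^k * (∑ j ∈ Finset.range n, X j ω) ^ (-k)) :=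
            ENNReal.ofReal_le_ofReal h1'
        _ = _ := ENNReal.ofReal_mul (Real.rpow_nonneg hAp.le k)
    calc ∫⁻ ω, ENNReal.ofReal ((‖vecOf Y p ω - v‖^2 / ED) ^ (-k)) ∂P
        ≤ ∫⁻ ω, ENNReal.ofReal ((A*p)^k)
            * ENNReal.ofReal ((∑ j ∈ Finset.range n, X j ω) ^ (-k)) ∂P :=
          lintegral_mono_ae hptwise
      _ = ENNReal.ofReal ((A*p)^k)
            * ∫⁻ ω, ENNReal.ofReal ((∑ j ∈ Finset.range n, X j ω) ^ (-k)) ∂P :=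
          lintegral_const_mul _ hSmeas
      _ ≤ ENNReal.ofReal ((A*p)^k)
            * ENNReal.ofReal (((n:ℝ)*a)^(-k) + T^k * ρ^n * (k*Real.Gamma k)⁻¹) :=
          mul_le_mul_right hJ _
      _ = ENNReal.ofReal ((A*p)^k * (((n:ℝ)*a)^(-k) + T^k*ρ^n*(k*Real.Gamma k)⁻¹)) :=
          (ENNReal.ofReal_mul (Real.rpow_nonneg hAp.le k)).symm
      _ ≤ _ := ENNReal.ofReal_le_ofReal harith
end
end

section
/- Let q > 2, C₁ < ∞ and σ_min > 0, and let (Y_i)_{i∈ℕ} be a sequence of real random variables with sup_{i∈ℕ} E|Y_i|^q ≤ C₁ and inf_{i∈ℕ} Var(Y_i) ≥ σ_min². Then there exists B̄ > 0 depending only on q, C₁ and σ_min² such that for all B ≥ B̄ and all i ∈ ℕ: Var( sign(Y_i) · min(|Y_i|, B) ) ≥ σ_min² / 2. -/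
open MeasureTheory ProbabilityTheory Filter
open scoped ENNReal

noncomputable section

private lemma measurable_realSign : Measurable Real.sign := by
  have h : Real.sign = fun r : ℝ => if r < 0 then (-1 : ℝ) else if 0 < r then 1 else 0 := by
    funext r; rfl
  rw [h]
  exact Measurable.ite (measurableSet_lt measurable_id measurable_const) measurable_const
    (Measurable.ite (measurableSet_lt measurable_const measurable_id) measurable_const
      measurable_const)

private lemma trunc_sq (x B : ℝ) (hB : 0 < B) :
    (Real.sign x * min |x| B) ^ 2 = (min |x| B) ^ 2 := by
  rcases lt_trichotomy x 0 with h | h | h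
  · rw [Real.sign_of_neg h]; ring
  · simp [h, min_eq_left hB.le]
  · rw [Real.sign_of_pos h, one_mul]

private lemma trunc_abs (x B : ℝ) (hB : 0 < B) :
    |Real.sign x * min |x| B| ≤ min |x| B := by
  have hmin0 : (0 : ℝ) ≤ min |x| B := le_min (abs_nonneg _) hB.le
  rcases lt_trichotomy x 0 with h | h | h
  · rw [Real.sign_of_neg h, abs_mul, abs_neg, abs_one, one_mul, abs_of_nonneg hmin0]
  · simp [h, hmin0, hB.le]
  · rw [Real.sign_of_pos h, one_mul, abs_of_nonneg hmin0]

private lemma trunc_p1 (q x B : ℝ) (hq : 0 < q - 2) (hB1 : 1 ≤ B) :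
    x ^ 2 - (Real.sign x * min |x| B) ^ 2 ≤ |x| ^ q / B ^ (q - 2) := by
  have hB : (0 : ℝ) < B := lt_of_lt_of_le one_pos hB1
  have hBq2pos : (0 : ℝ) < B ^ (q - 2) := Real.rpow_pos_of_pos hB _
  rw [trunc_sq x B hB, ← sq_abs x]
  rcases le_or_gt |x| B with h | h
  · rw [min_eq_left h]
    have : (0 : ℝ) ≤ |x| ^ q / B ^ (q - 2) := by positivity
    linarith
  · rw [min_eq_right h.le, le_div_iff₀ hBq2pos]
    have hfpos : (0 : ℝ) < |x| := lt_trans hB h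
    have key : |x| ^ 2 * B ^ (q - 2) ≤ |x| ^ q := by
      calc |x| ^ 2 * B ^ (q - 2) ≤ |x| ^ 2 * |x| ^ (q - 2) :=
            mul_le_mul_of_nonneg_left (Real.rpow_le_rpow hB.le h.le hq.le) (sq_nonneg _)
        _ = |x| ^ q := by
            rw [← Real.rpow_natCast (|x|) 2, ← Real.rpow_add hfpos]
            norm_num
    nlinarith [sq_nonneg B]

private lemma trunc_p2 (q x B : ℝ) (hq : 0 < q - 2) (hB1 : 1 ≤ B) :
    |x - Real.sign x * min |x| B| ≤ |x| ^ q / B ^ (q - 1) := by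
  have hB : (0 : ℝ) < B := lt_of_lt_of_le one_pos hB1
  have hBq1pos : (0 : ℝ) < B ^ (q - 1) := Real.rpow_pos_of_pos hB _
  have habs : |x - Real.sign x * min |x| B| = |x| - min |x| B := by
    rcases lt_trichotomy x 0 with h | h | h
    · rw [Real.sign_of_neg h]
      rw [abs_of_nonpos (by nlinarith [min_le_left (|x|) B, abs_of_neg h]), abs_of_neg h]
      ring
    · simp [h, min_eq_left hB.le]
    · rw [Real.sign_of_pos h, one_mul,
        abs_of_nonneg (by nlinarith [min_le_left (|x|) B, abs_of_pos h]), abs_of_pos h]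
  rw [habs]
  rcases le_or_gt |x| B with h | h
  · rw [min_eq_left h]
    have : (0 : ℝ) ≤ |x| ^ q / B ^ (q - 1) := by positivity
    linarith
  · rw [min_eq_right h.le, le_div_iff₀ hBq1pos]
    have hfpos : (0 : ℝ) < |x| := lt_trans hB h
    have key : |x| * B ^ (q - 1) ≤ |x| ^ q := by
      calc |x| * B ^ (q - 1) ≤ |x| * |x| ^ (q - 1) :=
            mul_le_mul_of_nonneg_left (Real.rpow_le_rpow hB.le h.le (by linarith))
              (abs_nonneg _)
        _ = |x| ^ q := by
            nth_rewrite 1 [← Real.rpow_one (|x|)]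
            rw [← Real.rpow_add hfpos]; norm_num
    nlinarith
  
private lemma trunc_p3 (q x : ℝ) (hq : 1 ≤ q) : |x| ≤ 1 + |x| ^ q := by
  rcases le_or_gt (|x|) 1 with h | h
  · have : (0 : ℝ) ≤ |x| ^ q := Real.rpow_nonneg (abs_nonneg _) _
    linarith
  · have h2 : |x| ^ (1 : ℝ) ≤ |x| ^ q := Real.rpow_le_rpow_of_exponent_le h.le hq
    rw [Real.rpow_one] at h2
    linarith

private lemma trunc_main {Ω : Type} [MeasurableSpace Ω] (P : Measure Ω)
    [IsProbabilityMeasure P] (q C σmin : ℝ) (hq : 2 < q) (hσ : 0 < σmin) (hC1 : 1 ≤ C)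
    (f : Ω → ℝ) (hf : Measurable f)
    (hmom : ∫⁻ ω, ENNReal.ofReal (|f ω| ^ q) ∂P ≤ ENNReal.ofReal C)
    (hvar : σmin ^ 2 ≤ variance f P)
    (B : ℝ) (hB1 : 1 ≤ B)
    (hBq : 2 * (C + 2 * (1 + C) * C) / σmin ^ 2 ≤ B ^ (q - 2)) :
    σmin ^ 2 / 2 ≤ variance (fun ω => Real.sign (f ω) * min |f ω| B) P := by
  have hC0 : (0 : ℝ) < C := lt_of_lt_of_le one_pos hC1
  have hσ2 : (0 : ℝ) < σmin ^ 2 := by positivity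
  have hq2 : (0 : ℝ) < q - 2 := by linarith
  have hq0 : (0 : ℝ) < q := by linarith
  have hB0 : (0 : ℝ) < B := lt_of_lt_of_le one_pos hB1
  have hBq2pos : (0 : ℝ) < B ^ (q - 2) := Real.rpow_pos_of_pos hB0 _
  have hBq1pos : (0 : ℝ) < B ^ (q - 1) := Real.rpow_pos_of_pos hB0 _
  have hlkey : ∀ ω, ((‖f ω‖₊ : ℝ≥0∞)) ^ q = ENNReal.ofReal (|f ω| ^ q) := by
    intro ω
    rw [← enorm_eq_nnnorm, ← ofReal_norm, Real.norm_eq_abs,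
      ← ENNReal.ofReal_rpow_of_nonneg (abs_nonneg _) hq0.le]
  have hlint : ∫⁻ ω, ((‖f ω‖₊ : ℝ≥0∞)) ^ q ∂P ≤ ENNReal.ofReal C := by
    simp only [hlkey]; exact hmom
  have hfq : MemLp f (ENNReal.ofReal q) P := by
    refine ⟨hf.aestronglyMeasurable, ?_⟩
    rw [eLpNorm_eq_lintegral_rpow_enorm_toReal (by simp only [ne_eq, ENNReal.ofReal_eq_zero]; linarith)
      ENNReal.ofReal_ne_top, ENNReal.toReal_ofReal hq0.le]
    exact ENNReal.rpow_lt_top_of_nonneg (by positivity)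
      (lt_of_le_of_lt hlint ENNReal.ofReal_lt_top).ne
  have hf2 : MemLp f 2 P := by
    refine hfq.mono_exponent ?_
    rw [show (2 : ℝ≥0∞) = ENNReal.ofReal 2 by simp]
    exact ENNReal.ofReal_le_ofReal hq.le
  have hfint : Integrable f P := hf2.integrable one_le_two
  have hfsq : Integrable (fun ω => f ω ^ 2) P := hf2.integrable_sq
  have hmomint : Integrable (fun ω => |f ω| ^ q) P := by
    have h := hfq.integrable_norm_rpow
      (by simp only [ne_eq, ENNReal.ofReal_eq_zero]; linarith) ENNReal.ofReal_ne_top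
    simpa [Real.norm_eq_abs, ENNReal.toReal_ofReal hq0.le] using h
  have hmomle : ∫ ω, |f ω| ^ q ∂P ≤ C := by
    rw [integral_eq_lintegral_of_nonneg_ae
      (Filter.Eventually.of_forall fun ω => Real.rpow_nonneg (abs_nonneg _) q)
      hmomint.aestronglyMeasurable]
    exact ENNReal.toReal_le_of_le_ofReal hC0.le hmom
  set g : Ω → ℝ := fun ω => Real.sign (f ω) * min |f ω| B with hgdef
  have hgm : Measurable g := (measurable_realSign.comp hf).mul ((hf.abs).min measurable_const)
  have hg2 : MemLp g 2 P :=
    MemLp.of_bound hgm.aestronglyMeasurable B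
      (Filter.Eventually.of_forall fun ω => by
        rw [Real.norm_eq_abs]
        exact le_trans (trunc_abs _ _ hB0) (min_le_right _ _))
  have hgint : Integrable g P := hg2.integrable one_le_two
  have hgsqint : Integrable (fun ω => g ω ^ 2) P := hg2.integrable_sq
  have hI1 : ∫ ω, f ω ^ 2 ∂P - ∫ ω, g ω ^ 2 ∂P ≤ C / B ^ (q - 2) := by
    rw [← integral_sub hfsq hgsqint]
    calc ∫ ω, (f ω ^ 2 - g ω ^ 2) ∂P ≤ ∫ ω, |f ω| ^ q / B ^ (q - 2) ∂P :=
          integral_mono (hfsq.sub hgsqint) (hmomint.div_const _)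
            (fun ω => trunc_p1 q (f ω) B hq2 hB1)
      _ = (∫ ω, |f ω| ^ q ∂P) / B ^ (q - 2) := integral_div _ _
      _ ≤ C / B ^ (q - 2) := by gcongr
  have hI2 : |∫ ω, f ω ∂P - ∫ ω, g ω ∂P| ≤ C / B ^ (q - 1) := by
    rw [← integral_sub hfint hgint]
    calc |∫ ω, (f ω - g ω) ∂P| ≤ ∫ ω, |f ω - g ω| ∂P := by
          simpa [Real.norm_eq_abs] using norm_integral_le_integral_norm (fun ω => f ω - g ω)
      _ ≤ ∫ ω, |f ω| ^ q / B ^ (q - 1) ∂P :=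
          integral_mono (hfint.sub hgint).abs (hmomint.div_const _)
            (fun ω => trunc_p2 q (f ω) B hq2 hB1)
      _ = (∫ ω, |f ω| ^ q ∂P) / B ^ (q - 1) := integral_div _ _
      _ ≤ C / B ^ (q - 1) := by gcongr
  have hIfabs : ∫ ω, |f ω| ∂P ≤ 1 + C := by
    calc ∫ ω, |f ω| ∂P ≤ ∫ ω, (1 + |f ω| ^ q) ∂P :=
          integral_mono hfint.abs ((integrable_const 1).add hmomint)
            (fun ω => trunc_p3 q (f ω) (by linarith))
      _ = 1 + ∫ ω, |f ω| ^ q ∂P := by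
          rw [integral_add (integrable_const 1) hmomint, integral_const]
          simp
      _ ≤ 1 + C := by linarith
  have hI3 : |∫ ω, f ω ∂P| ≤ 1 + C := by
    calc |∫ ω, f ω ∂P| ≤ ∫ ω, |f ω| ∂P := by
          simpa [Real.norm_eq_abs] using norm_integral_le_integral_norm f
      _ ≤ 1 + C := hIfabs
  have hI4 : |∫ ω, g ω ∂P| ≤ 1 + C := by
    calc |∫ ω, g ω ∂P| ≤ ∫ ω, |g ω| ∂P := by
          simpa [Real.norm_eq_abs] using norm_integral_le_integral_norm g
      _ ≤ ∫ ω, |f ω| ∂P :=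
          integral_mono hgint.abs hfint.abs
            (fun ω => le_trans (trunc_abs _ _ hB0) (min_le_left _ _))
      _ ≤ 1 + C := hIfabs
  have hVf : variance f P = ∫ ω, f ω ^ 2 ∂P - (∫ ω, f ω ∂P) ^ 2 := by
    have h := variance_eq_sub (μ := P) hf2
    simpa using h
  have hVg : variance g P = ∫ ω, g ω ^ 2 ∂P - (∫ ω, g ω ∂P) ^ 2 := by
    have h := variance_eq_sub (μ := P) hg2
    simpa using h
  set a := ∫ ω, f ω ∂P
  set b := ∫ ω, g ω ∂P
  have h5 : b ^ 2 - a ^ 2 ≤ C / B ^ (q - 1) * (2 * (1 + C)) := by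
    have e2 : (b - a) * (b + a) ≤ |b - a| * |b + a| := by
      calc (b - a) * (b + a) ≤ |(b - a) * (b + a)| := le_abs_self _
        _ = |b - a| * |b + a| := abs_mul _ _
    have e3 : |b - a| = |a - b| := abs_sub_comm _ _
    have e4 : |b + a| ≤ 2 * (1 + C) := by
      calc |b + a| ≤ |b| + |a| := abs_add_le _ _
        _ ≤ 2 * (1 + C) := by linarith
    have e5 : |b - a| * |b + a| ≤ C / B ^ (q - 1) * (2 * (1 + C)) := by
      rw [e3]
      exact mul_le_mul hI2 e4 (abs_nonneg _) (by positivity)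
    nlinarith
  have hBmono : B ^ (q - 2) ≤ B ^ (q - 1) :=
    Real.rpow_le_rpow_of_exponent_le hB1 (by linarith)
  have h6 : C / B ^ (q - 1) ≤ C / B ^ (q - 2) := by gcongr
  have h7 : (C + 2 * (1 + C) * C) / B ^ (q - 2) ≤ σmin ^ 2 / 2 := by
    rw [div_le_div_iff₀ hBq2pos two_pos]
    have h8 := (div_le_iff₀ hσ2).mp hBq
    linarith
  have h8 : C / B ^ (q - 1) * (2 * (1 + C)) ≤ C / B ^ (q - 2) * (2 * (1 + C)) :=
    mul_le_mul_of_nonneg_right h6 (by positivity)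
  have h9 : C / B ^ (q - 2) + C / B ^ (q - 2) * (2 * (1 + C))
      = (C + 2 * (1 + C) * C) / B ^ (q - 2) := by ring
  rw [hVg]
  rw [hVf] at hvar
  linarith

/-- Truncation preserves variance: there exists `B̄ > 0` depending only on `q, C₁, σmin²`
such that for every sequence with `E|Y_i|^q ≤ C₁` and `Var(Y_i) ≥ σmin²`, and every
`B ≥ B̄`, `Var(sign(Y_i)·min(|Y_i|, B)) ≥ σmin²/2`. -/
theorem truncated_variance_bound
    (q C₁ σmin : ℝ) (hq : 2 < q) (hσ : 0 < σmin) :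
    ∃ Bbar : ℝ, 0 < Bbar ∧
      ∀ (Ω : Type) [MeasurableSpace Ω] (P : Measure Ω), IsProbabilityMeasure P →
        ∀ Y : ℕ → Ω → ℝ, (∀ i, Measurable (Y i)) →
          (∀ i, ∫⁻ ω, ENNReal.ofReal (|Y i ω| ^ q) ∂P ≤ ENNReal.ofReal C₁) →
          (∀ i, σmin ^ 2 ≤ variance (Y i) P) →
          ∀ B : ℝ, Bbar ≤ B →
            ∀ i : ℕ,
              σmin ^ 2 / 2 ≤ variance (fun ω => Real.sign (Y i ω) * min |Y i ω| B) P := by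
  set C : ℝ := max C₁ 1 with hCdef
  have hC1 : (1 : ℝ) ≤ C := le_max_right _ _
  have hq2 : (0 : ℝ) < q - 2 := by linarith
  have hσ2 : (0 : ℝ) < σmin ^ 2 := by positivity
  have hK0 : (0 : ℝ) < C + 2 * (1 + C) * C := by
    have : (0 : ℝ) < C := lt_of_lt_of_le one_pos hC1
    positivity
  refine ⟨max 1 ((2 * (C + 2 * (1 + C) * C) / σmin ^ 2) ^ (1 / (q - 2))),
    lt_of_lt_of_le one_pos (le_max_left _ _), ?_⟩
  intro Ω _ P hP Y hm hmom hvar B hB i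
  have hB1 : (1 : ℝ) ≤ B := le_trans (le_max_left _ _) hB
  have hBq : 2 * (C + 2 * (1 + C) * C) / σmin ^ 2 ≤ B ^ (q - 2) := by
    have h1 : (2 * (C + 2 * (1 + C) * C) / σmin ^ 2) ^ (1 / (q - 2)) ≤ B :=
      le_trans (le_max_right _ _) hB
    have h0 : (0 : ℝ) ≤ 2 * (C + 2 * (1 + C) * C) / σmin ^ 2 := by positivity
    calc 2 * (C + 2 * (1 + C) * C) / σmin ^ 2
        = ((2 * (C + 2 * (1 + C) * C) / σmin ^ 2) ^ (1 / (q - 2))) ^ (q - 2) := by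
          rw [← Real.rpow_mul h0, one_div, inv_mul_cancel₀ hq2.ne', Real.rpow_one]
      _ ≤ B ^ (q - 2) := Real.rpow_le_rpow (Real.rpow_nonneg h0 _) h1 hq2.le
  exact trunc_main P q C σmin hq hσ hC1 (Y i) (hm i)
    (le_trans (hmom i) (ENNReal.ofReal_le_ofReal (le_max_left _ _))) (hvar i) B hB1 hBq
end
end

section
/- Fix an integer M ≥ 0 and reals c, σ_min > 0, q > 2, C ≥ 1, together with k > 0 and n ∈ ℕ. Then there exists a finite constant B₂ = B₂(k, n, M, q, c, σ_min, C) such that for every sequence (X_i)_{i∈ℕ} ∈ D(M, q, c, σ_min, C), every p ≥ ⌈2k⌉(M+1) + 2(nM+1), and every index 1 ≤ i ≤ p, the geometric median m_p of X := (X_1, …, X_p) satisfies E[ ‖X_{−ℰⁿ(i)} − m_{p,−ℰⁿ(i)}‖^{−k} ] ≤ B₂ / ( E[ ‖X_{−ℰⁿ(i)} − m_{p,−ℰⁿ(i)}‖² ] )^{k/2}, where ℰⁿ(i) := {i−nM, …, i+nM} and for v ∈ ℝ^p the vector v_{−ℰⁿ(i)} := (v_j)_{j ∈ {1,…,p} \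 ℰⁿ(i)}. -/
open MeasureTheory ProbabilityTheory Filter
open scoped ENNReal

noncomputable section

section AuxLemmas

open Real Set

set_option maxHeartbeats 1000000

lemma exists_gapped (M : ℕ) (A : Finset ℕ) :
    ∃ T : Finset ℕ, T ⊆ A ∧ (∀ s ∈ T, ∀ t ∈ T, s < t → s + (M + 1) ≤ t) ∧
      A.card ≤ (M + 1) * T.card := by
  induction A using Finset.strongInduction with
  | _ A ih =>
    rcases A.eq_empty_or_nonempty with rfl | hA
    · exact ⟨∅, by simp⟩
    set a := A.max' hA with ha
    set A' := A.filter (fun x => x + (M + 1) ≤ a) with hA'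
    have haA : a ∈ A := A.max'_mem hA
    have haA' : a ∉ A' := by simp [hA']
    have hsub : A' ⊂ A := ⟨Finset.filter_subset _ _, fun h => haA' (h haA)⟩
    obtain ⟨T, hTA', hgap, hcard⟩ := ih A' hsub
    have haT : a ∉ T := fun h => haA' (hTA' h)
    refine ⟨insert a T, ?_, ?_, ?_⟩
    · exact Finset.insert_subset haA (hTA'.trans (Finset.filter_subset _ _))
    · intro s hs t ht hst
      rcases Finset.mem_insert.1 hs with rfl | hs
      · rcases Finset.mem_insert.1 ht with rfl | ht
        · omega
        · exact absurd (A.le_max' t (hTA'.trans (Finset.filter_subset _ _) ht)) (by omega)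
      · rcases Finset.mem_insert.1 ht with rfl | ht
        · exact (Finset.mem_filter.1 (hTA' hs)).2
        · exact hgap s hs t ht hst
    · have hsplit := Finset.card_filter_add_card_filter_not
        (s := A) (p := fun x => x + (M + 1) ≤ a)
      have hcompl : (A.filter (fun x => ¬ (x + (M + 1) ≤ a))) ⊆ Finset.Icc (a - M) a := by
        intro x hx
        rcases Finset.mem_filter.1 hx with ⟨hxA, hxc⟩
        have := A.le_max' x hxA
        simp only [Finset.mem_Icc]
        omega
      have h2 : (A.filter (fun x => ¬ (x + (M + 1) ≤ a))).card ≤ M + 1 := by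
        calc _ ≤ (Finset.Icc (a - M) a).card := Finset.card_le_card hcompl
        _ ≤ M + 1 := by rw [Nat.card_Icc]; omega
      rw [← hA'] at hsplit
      rw [Finset.card_insert_of_notMem haT, Nat.mul_add, Nat.mul_one]
      omega

lemma lintegral_prod_gapped {Ω : Type*} [MeasurableSpace Ω] (P : Measure Ω)
    [IsProbabilityMeasure P] (M : ℕ) (X : ℕ → Ω → ℝ) (hX : ∀ i, Measurable (X i))
    (hdep : MDependent P M X) (g : ℕ → ℝ → ℝ≥0∞) (hg : ∀ i, Measurable (g i))
    (T : Finset ℕ) (hT : ∀ s ∈ T, ∀ t ∈ T, s < t → s + (M + 1) ≤ t) :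
    ∫⁻ ω, ∏ t ∈ T, g t (X t ω) ∂P = ∏ t ∈ T, ∫⁻ ω, g t (X t ω) ∂P := by
  revert hT
  induction T using Finset.induction_on_max with
  | empty => simp
  | insert a s hlt ih =>
    intro hgap
    have has : a ∉ s := fun h => absurd (hlt a h) (lt_irrefl a)
    have hgs : ∀ x ∈ s, ∀ y ∈ s, x < y → x + (M + 1) ≤ y := fun x hx y hy hxy =>
      hgap x (Finset.mem_insert_of_mem hx) y (Finset.mem_insert_of_mem hy) hxy
    rcases s.eq_empty_or_nonempty with rfl | ⟨b, hb⟩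
    · simp
    have hba : b + (M + 1) ≤ a :=
      hgap b (Finset.mem_insert_of_mem hb) a (Finset.mem_insert_self a s) (hlt b hb)
    set K := a - (M + 1) with hK
    have hKa : K + M + 1 = a := by omega
    have hts : ∀ t ∈ s, t ≤ K := fun t ht => by
      have := hgap t (Finset.mem_insert_of_mem ht) a (Finset.mem_insert_self a s) (hlt t ht)
      omega
    set φ : ({i : ℕ // i ≤ K} → ℝ) → ℝ≥0∞ :=
      fun v => ∏ t ∈ s.attach, g t.1 (v ⟨t.1, hts t.1 t.2⟩) with hφdef
    set ψ : ({i : ℕ // K + M + 1 ≤ i} → ℝ) → ℝ≥0∞ :=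
      fun v => g a (v ⟨a, le_of_eq hKa⟩) with hψdef
    have hφ : Measurable φ :=
      Finset.measurable_prod _ (fun t _ => (hg t.1).comp (measurable_pi_apply _))
    have hψ : Measurable ψ := (hg a).comp (measurable_pi_apply _)
    have hindep :
        IndepFun (fun ω => ∏ t ∈ s, g t (X t ω)) (fun ω => g a (X a ω)) P := by
      have h := ((hdep K).comp hφ hψ)
      have e1 : (φ ∘ fun ω => fun i : {i : ℕ // i ≤ K} => X i.1 ω)
          = fun ω => ∏ t ∈ s, g t (X t ω) := by
        funext ω
        simp only [Function.comp, hφdef]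
        exact Finset.prod_attach s (fun t => g t (X t ω))
      have e2 : (ψ ∘ fun ω => fun i : {i : ℕ // K + M + 1 ≤ i} => X i.1 ω)
          = fun ω => g a (X a ω) := rfl
      rwa [e1, e2] at h
    have hmf : Measurable (fun ω => ∏ t ∈ s, g t (X t ω)) :=
      Finset.measurable_prod _ (fun t _ => (hg t).comp (hX t))
    have hmg : Measurable (fun ω => g a (X a ω)) := (hg a).comp (hX a)
    calc ∫⁻ ω, ∏ t ∈ insert a s, g t (X t ω) ∂P
        = ∫⁻ ω, ((fun ω => ∏ t ∈ s, g t (X t ω)) * (fun ω => g a (X a ω))) ω ∂P := by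
          congr 1; funext ω; rw [Finset.prod_insert has]; exact (mul_comm _ _)
      _ = (∫⁻ ω, ∏ t ∈ s, g t (X t ω) ∂P) * ∫⁻ ω, g a (X a ω) ∂P :=
          lintegral_mul_eq_lintegral_mul_lintegral_of_indepFun hmf hmg hindep
      _ = (∏ t ∈ s, ∫⁻ ω, g t (X t ω) ∂P) * ∫⁻ ω, g a (X a ω) ∂P := by rw [ih hgs]
      _ = ∏ t ∈ insert a s, ∫⁻ ω, g t (X t ω) ∂P := by
          rw [Finset.prod_insert has]; exact (mul_comm _ _)

lemma laplace_bound {Ω : Type*} [MeasurableSpace Ω] (P : Measure Ω) [IsProbabilityMeasure P]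
    {c : ℝ} (hc : 0 ≤ c) (Y : Ω → ℝ) (hY : Measurable Y) (habs : Measure.map Y P ≪ volume)
    (hd : ∀ᵐ x ∂(volume : Measure ℝ), (Measure.map Y P).rnDeriv volume x ≤ ENNReal.ofReal c)
    (a l : ℝ) (hl : 0 < l) :
    ∫⁻ ω, ENNReal.ofReal (Real.exp (-(l * (Y ω - a) ^ 2))) ∂P
      ≤ ENNReal.ofReal (c * Real.sqrt (π / l)) := by
  set f : ℝ → ℝ≥0∞ := fun x => ENNReal.ofReal (Real.exp (-(l * (x - a) ^ 2))) with hf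
  have hfm : Measurable f := by
    apply ENNReal.measurable_ofReal.comp
    exact (Real.measurable_exp.comp ((measurable_id.sub_const a).pow_const 2
      |>.const_mul l).neg)
  haveI : IsFiniteMeasure (Measure.map Y P) := Measure.isFiniteMeasure_map P Y
  have h1 : ∫⁻ ω, f (Y ω) ∂P = ∫⁻ x, f x ∂(Measure.map Y P) := (lintegral_map hfm hY).symm
  have h2 : Measure.map Y P = volume.withDensity ((Measure.map Y P).rnDeriv volume) :=
    (Measure.withDensity_rnDeriv_eq _ _ habs).symm
  have hint : Integrable (fun x : ℝ => Real.exp (-(l * (x - a) ^ 2))) := by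
    have := (integrable_exp_neg_mul_sq hl).comp_sub_right a
    simpa [neg_mul] using this
  have hgauss : ∫ x : ℝ, Real.exp (-(l * (x - a) ^ 2)) = Real.sqrt (π / l) := by
    have h3 : ∫ x : ℝ, Real.exp (-(l * (x - a) ^ 2))
        = ∫ x : ℝ, Real.exp (-(l * x ^ 2)) :=
      integral_sub_right_eq_self (fun x => Real.exp (-(l * x ^ 2))) a
    rw [h3]
    simpa [neg_mul] using integral_gaussian l
  calc ∫⁻ ω, f (Y ω) ∂P
      = ∫⁻ x, ((Measure.map Y P).rnDeriv volume * f) x ∂volume := by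
        rw [h1]
        conv_lhs => rw [h2]
        exact lintegral_withDensity_eq_lintegral_mul _
          (Measure.measurable_rnDeriv _ _) hfm
    _ ≤ ∫⁻ x, ENNReal.ofReal c * f x ∂volume := by
        apply lintegral_mono_ae
        filter_upwards [hd] with x hx
        exact mul_le_mul_left hx _
    _ = ENNReal.ofReal c * ∫⁻ x, f x ∂volume := lintegral_const_mul _ hfm
    _ ≤ ENNReal.ofReal c * ENNReal.ofReal (Real.sqrt (π / l)) := by
        gcongr
        rw [hf, ← ofReal_integral_eq_lintegral_ofReal hint
          (Eventually.of_forall fun x => (Real.exp_pos _).le), hgauss]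
    _ = ENNReal.ofReal (c * Real.sqrt (π / l)) := (ENNReal.ofReal_mul hc).symm

lemma chernoff_bound {Ω : Type*} [MeasurableSpace Ω] (P : Measure Ω)
    [IsProbabilityMeasure P] (M : ℕ) {c : ℝ} (hc : 0 ≤ c)
    (X : ℕ → Ω → ℝ) (hX : ∀ i, Measurable (X i)) (hdep : MDependent P M X)
    (habs : ∀ i, Measure.map (X i) P ≪ volume)
    (hd : ∀ i, ∀ᵐ x ∂(volume : Measure ℝ),
      (Measure.map (X i) P).rnDeriv volume x ≤ ENNReal.ofReal c)
    (a : ℕ → ℝ) (T : Finset ℕ) (hT : ∀ s ∈ T, ∀ t ∈ T, s < t → s + (M + 1) ≤ t)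
    (S : Ω → ℝ) (hS : Measurable S)
    (hST : ∀ ω, ∑ t ∈ T, (X t ω - a t) ^ 2 ≤ S ω)
    (u l : ℝ) (hl : 0 < l) :
    P {ω | S ω ≤ u} ≤ ENNReal.ofReal (Real.exp (l * u) * (c * Real.sqrt (π / l)) ^ T.card) := by
  set g : ℕ → ℝ → ℝ≥0∞ := fun t x => ENNReal.ofReal (Real.exp (-(l * (x - a t) ^ 2))) with hg
  have hgm : ∀ t, Measurable (g t) := fun t =>
    ENNReal.measurable_ofReal.comp (Real.measurable_exp.comp
      (((measurable_id.sub_const (a t)).pow_const 2 |>.const_mul l).neg))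
  have hmeas : MeasurableSet {ω | S ω ≤ u} := measurableSet_le hS measurable_const
  have hprodm : Measurable (fun ω => ∏ t ∈ T, g t (X t ω)) :=
    Finset.measurable_prod _ (fun t _ => (hgm t).comp (hX t))
  have key : ∀ ω, {ω | S ω ≤ u}.indicator (fun _ => (1 : ℝ≥0∞)) ω
      ≤ ENNReal.ofReal (Real.exp (l * u)) * ∏ t ∈ T, g t (X t ω) := by
    intro ω
    by_cases hω : S ω ≤ u
    · rw [Set.indicator_of_mem (show ω ∈ {ω | S ω ≤ u} from hω)]
      have hre : ENNReal.ofReal (Real.exp (l * u)) * ∏ t ∈ T, g t (X t ω)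
          = ENNReal.ofReal (Real.exp (l * u) *
              Real.exp (∑ t ∈ T, -(l * (X t ω - a t) ^ 2))) := by
        rw [hg, ← ENNReal.ofReal_prod_of_nonneg (fun t _ => (Real.exp_pos _).le),
          ← Real.exp_sum, ← ENNReal.ofReal_mul (Real.exp_pos _).le]
      rw [hre, ← Real.exp_add]
      have h1 : (0 : ℝ) ≤ l * u + ∑ t ∈ T, -(l * (X t ω - a t) ^ 2) := by
        rw [Finset.sum_neg_distrib, ← Finset.mul_sum]
        have := (hST ω).trans hω
        nlinarith [this, hl]
      calc (1 : ℝ≥0∞) = ENNReal.ofReal (Real.exp 0) := by simp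
        _ ≤ _ := ENNReal.ofReal_le_ofReal (Real.exp_le_exp.2 h1)
    · rw [Set.indicator_of_notMem (show ω ∉ {ω | S ω ≤ u} from hω)]; exact zero_le
  calc P {ω | S ω ≤ u}
      = ∫⁻ ω, {ω | S ω ≤ u}.indicator (fun _ => (1 : ℝ≥0∞)) ω ∂P :=
        (lintegral_indicator_one hmeas).symm
    _ ≤ ∫⁻ ω, ENNReal.ofReal (Real.exp (l * u)) * ∏ t ∈ T, g t (X t ω) ∂P :=
        lintegral_mono key
    _ = ENNReal.ofReal (Real.exp (l * u)) * ∫⁻ ω, ∏ t ∈ T, g t (X t ω) ∂P :=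
        lintegral_const_mul _ hprodm
    _ = ENNReal.ofReal (Real.exp (l * u)) * ∏ t ∈ T, ∫⁻ ω, g t (X t ω) ∂P := by
        rw [lintegral_prod_gapped P M X hX hdep g hgm T hT]
    _ ≤ ENNReal.ofReal (Real.exp (l * u)) *
        ∏ _t ∈ T, ENNReal.ofReal (c * Real.sqrt (π / l)) := by
        refine mul_le_mul_right (Finset.prod_le_prod' fun t _ => ?_) _
        exact laplace_bound P hc (X t) (hX t) (habs t) (hd t) (a t) l hl
    _ = ENNReal.ofReal (Real.exp (l * u) * (c * Real.sqrt (π / l)) ^ T.card) := by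
        rw [Finset.prod_const, ← ENNReal.ofReal_pow
          (mul_nonneg hc (Real.sqrt_nonneg _)), ← ENNReal.ofReal_mul (Real.exp_pos _).le]

lemma sq_moment_bound {Ω : Type*} [MeasurableSpace Ω] (P : Measure Ω)
    [IsProbabilityMeasure P] {q C : ℝ} (hq : 2 ≤ q) (hC : 1 ≤ C) (Y : Ω → ℝ)
    (hY : Measurable Y)
    (hmom : ∫⁻ ω, ENNReal.ofReal (|Y ω| ^ q) ∂P ≤ ENNReal.ofReal C) :
    Integrable (fun ω => Y ω ^ 2) P ∧ ∫ ω, Y ω ^ 2 ∂P ≤ 2 * C := by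
  have hqm : Measurable (fun ω => |Y ω| ^ q) := hY.abs.pow measurable_const
  have hqnn : ∀ ω, 0 ≤ |Y ω| ^ q := fun ω => Real.rpow_nonneg (abs_nonneg _) _
  have hqint : Integrable (fun ω => |Y ω| ^ q) P := by
    refine ⟨hqm.aestronglyMeasurable, ?_⟩
    rw [hasFiniteIntegral_iff_ofReal (Eventually.of_forall hqnn)]
    exact lt_of_le_of_lt hmom ENNReal.ofReal_lt_top
  have hptw : ∀ ω, Y ω ^ 2 ≤ 1 + |Y ω| ^ q := by
    intro ω
    by_cases h : |Y ω| ≤ 1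
    · have h1 : Y ω ^ 2 ≤ 1 := by
        rw [← sq_abs]
        exact pow_le_one₀ (abs_nonneg _) h
      linarith [hqnn ω]
    · push_neg at h
      have h2 : |Y ω| ^ (2 : ℝ) ≤ |Y ω| ^ q :=
        Real.rpow_le_rpow_of_exponent_le h.le hq
      rw [Real.rpow_two, sq_abs] at h2
      linarith
  have hsqint : Integrable (fun ω => Y ω ^ 2) P := by
    refine Integrable.mono' ((integrable_const (1 : ℝ)).add hqint)
      ((hY.pow measurable_const).aestronglyMeasurable) ?_
    refine Eventually.of_forall fun ω => ?_
    rw [Real.norm_eq_abs, abs_of_nonneg (sq_nonneg _)]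
    exact hptw ω
  refine ⟨hsqint, ?_⟩
  have hqle : ∫ ω, |Y ω| ^ q ∂P ≤ C := by
    have h1 := ofReal_integral_eq_lintegral_ofReal hqint (Eventually.of_forall hqnn)
    have h2 : ENNReal.ofReal (∫ ω, |Y ω| ^ q ∂P) ≤ ENNReal.ofReal C := h1 ▸ hmom
    exact (ENNReal.ofReal_le_ofReal_iff (by linarith)).1 h2
  calc ∫ ω, Y ω ^ 2 ∂P ≤ ∫ ω, (1 + |Y ω| ^ q) ∂P :=
        integral_mono hsqint ((integrable_const _).add hqint) hptw
    _ = 1 + ∫ ω, |Y ω| ^ q ∂P := by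
        rw [integral_add (integrable_const _) hqint, integral_const]
        simp
    _ ≤ 2 * C := by linarith

lemma variance_le_integral_sq_sub {Ω : Type*} [MeasurableSpace Ω] (P : Measure Ω)
    [IsProbabilityMeasure P] (Y : Ω → ℝ) (h2 : MemLp Y 2 P) (a : ℝ) :
    variance Y P ≤ ∫ ω, (Y ω - a) ^ 2 ∂P := by
  have hint : Integrable Y P := h2.integrable one_le_two
  have hsq : Integrable (fun ω => Y ω ^ 2) P :=
    (memLp_two_iff_integrable_sq h2.aestronglyMeasurable).1 h2
  have hvar := variance_eq_sub h2
  have hexp : ∫ ω, (Y ω - a) ^ 2 ∂P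
      = ∫ ω, Y ω ^ 2 ∂P - 2 * a * ∫ ω, Y ω ∂P + a ^ 2 := by
    have e : ∀ ω, (Y ω - a) ^ 2 = Y ω ^ 2 - (2 * a) * Y ω + a ^ 2 := fun ω => by ring
    rw [show (fun ω => (Y ω - a) ^ 2) = fun ω => Y ω ^ 2 - (2 * a) * Y ω + a ^ 2 from
      funext e]
    rw [integral_add (f := fun ω => Y ω ^ 2 - 2 * a * Y ω) (g := fun _ => a ^ 2)
        (hsq.sub (hint.const_mul (2 * a))) (integrable_const _),
      integral_sub hsq (hint.const_mul (2 * a)), MeasureTheory.integral_const_mul,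
      integral_const]
    simp
  rw [hvar, hexp]
  have hYY : ∫ (x : Ω), (Y ^ 2) x ∂P = ∫ ω, Y ω ^ 2 ∂P := rfl
  rw [hYY]
  nlinarith [sq_nonneg ((∫ ω, Y ω ∂P) - a)]

lemma core_bound {Ω : Type*} [MeasurableSpace Ω] (P : Measure Ω)
    [IsProbabilityMeasure P] (M : ℕ) {c : ℝ} (hc : 0 < c)
    (X : ℕ → Ω → ℝ) (hX : ∀ i, Measurable (X i)) (hdep : MDependent P M X)
    (habs : ∀ i, Measure.map (X i) P ≪ volume)
    (hd : ∀ i, ∀ᵐ x ∂(volume : Measure ℝ),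
      (Measure.map (X i) P).rnDeriv volume x ≤ ENNReal.ofReal c)
    (a : ℕ → ℝ) (T : Finset ℕ) (hT : ∀ s ∈ T, ∀ t ∈ T, s < t → s + (M + 1) ≤ t)
    (S : Ω → ℝ) (hS : Measurable S)
    (hST : ∀ ω, ∑ t ∈ T, (X t ω - a t) ^ 2 ≤ S ω) (hS0 : ∀ ω, 0 ≤ S ω)
    {k : ℝ} (hk : 0 < k) (hkN : k + 1 ≤ (T.card : ℝ)) :
    ∫⁻ ω, ENNReal.ofReal (Real.sqrt (S ω) ^ (-k)) ∂P
      ≤ ENNReal.ofReal ((1 + k) *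
          (2 * π * Real.exp 1 * c ^ 2 / (T.card : ℝ)) ^ (k / 2)) := by
  set N : ℝ := (T.card : ℝ) with hN
  have hN0 : 0 < N := by linarith
  have hNk : k < N := by linarith
  set β : ℝ := 2 * π * Real.exp 1 * c ^ 2 / N with hβ
  have hβ0 : 0 < β := by
    apply div_pos _ hN0
    positivity
  set t₀ : ℝ := β ^ (k / 2) with ht₀def
  have ht₀ : 0 < t₀ := rpow_pos_of_pos hβ0 _
  have hfm : AEMeasurable (fun ω => Real.sqrt (S ω) ^ (-k)) P :=
    ((hS.sqrt.pow measurable_const)).aemeasurable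
  rw [lintegral_eq_lintegral_meas_le P
    (Eventually.of_forall (fun ω => Real.rpow_nonneg (Real.sqrt_nonneg _) _)) hfm]
  -- tail bound
  have tail : ∀ t : ℝ, 0 < t → P {ω | t ≤ Real.sqrt (S ω) ^ (-k)}
      ≤ ENNReal.ofReal (β ^ (N / 2) * t ^ (-(N / k))) := by
    intro t ht
    have htk : (0 : ℝ) < t ^ (2 / k) := rpow_pos_of_pos ht _
    set l : ℝ := N / 2 * t ^ (2 / k) with hldef
    have hl0 : 0 < l := by positivity
    set u : ℝ := t ^ (-(2 / k)) with hudef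
    have hu0 : 0 < u := rpow_pos_of_pos ht _
    have hsub : {ω | t ≤ Real.sqrt (S ω) ^ (-k)} ⊆ {ω | S ω ≤ u} := by
      intro ω hω
      simp only [Set.mem_setOf_eq] at hω ⊢
      rcases eq_or_lt_of_le (hS0 ω) with h0 | h0
      · exfalso
        rw [← h0, Real.sqrt_zero, Real.zero_rpow (neg_ne_zero.2 hk.ne')] at hω
        linarith
      · have hsq : 0 < Real.sqrt (S ω) := Real.sqrt_pos.2 h0
        have h1 : (Real.sqrt (S ω) ^ (-k)) ^ (-(1 / k)) ≤ t ^ (-(1 / k)) := by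
          apply Real.rpow_le_rpow_of_nonpos ht hω
          have h1k : 0 < 1 / k := by positivity
          linarith
        have h2 : (Real.sqrt (S ω) ^ (-k)) ^ (-(1 / k)) = Real.sqrt (S ω) := by
          rw [← Real.rpow_mul hsq.le]
          rw [show -k * -(1 / k) = 1 by field_simp, Real.rpow_one]
        rw [h2] at h1
        have h4 : S ω ≤ (t ^ (-(1 / k))) ^ (2 : ℕ) := by
          calc S ω = Real.sqrt (S ω) ^ (2 : ℕ) := (Real.sq_sqrt (hS0 ω)).symm
            _ ≤ (t ^ (-(1 / k))) ^ (2 : ℕ) := by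
                exact pow_le_pow_left₀ hsq.le h1 2
        have h5 : (t ^ (-(1 / k))) ^ (2 : ℕ) = u := by
          rw [← Real.rpow_natCast (t ^ (-(1 / k))) 2, ← Real.rpow_mul ht.le, hudef]
          congr 1
          push_cast
          ring
        linarith [h4, h5.symm ▸ h4]
    refine (measure_mono hsub).trans ?_
    refine (chernoff_bound P M hc.le X hX hdep habs hd a T hT S hS hST u l hl0).trans ?_
    apply ENNReal.ofReal_le_ofReal
    -- real arithmetic
    have e1 : l * u = N / 2 := by
      rw [hldef, hudef, mul_assoc, ← Real.rpow_add ht]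
      simp
    have h2πN : (0:ℝ) ≤ 2 * π / N := by positivity
    have e2 : π / l = 2 * π / N * t ^ (-(2 / k)) := by
      rw [hldef, Real.rpow_neg ht.le]
      field_simp
    have e3 : Real.sqrt (π / l) = Real.sqrt (2 * π / N) * t ^ (-(1 / k)) := by
      rw [e2, Real.sqrt_mul h2πN]
      congr 1
      rw [Real.sqrt_eq_rpow, ← Real.rpow_mul ht.le]
      congr 1
      field_simp
    set d : ℝ := c * Real.sqrt (2 * π / N) with hd2
    have hd0 : 0 ≤ d := mul_nonneg hc.le (Real.sqrt_nonneg _)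
    have e4 : (c * Real.sqrt (π / l)) ^ T.card
        = d ^ (N : ℝ) * t ^ (-(N / k)) := by
      rw [e3, ← mul_assoc, mul_pow, ← Real.rpow_natCast d, ← Real.rpow_natCast (t ^ (-(1/k))),
        ← Real.rpow_mul ht.le, ← hN]
      congr 1
      field_simp
    have e5 : Real.exp (l * u) * (c * Real.sqrt (π / l)) ^ T.card
        = β ^ (N / 2) * t ^ (-(N / k)) := by
      rw [e4, e1, ← mul_assoc]
      congr 1
      have hd2' : d ^ (N : ℝ) = (d ^ (2:ℝ)) ^ (N / 2) := by
        rw [← Real.rpow_mul hd0]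
        congr 1
        ring
      have hdsq : d ^ (2:ℝ) = c ^ 2 * (2 * π / N) := by
        rw [Real.rpow_two, hd2, mul_pow, Real.sq_sqrt h2πN]
      rw [hd2', hdsq, ← Real.exp_one_rpow (N / 2),
        ← Real.mul_rpow (Real.exp_pos 1).le (by positivity)]
      congr 1
      rw [hβ]
      field_simp
    rw [e5]
  have hmb : Measurable (fun t : ℝ => ENNReal.ofReal (β ^ (N / 2) * t ^ (-(N / k)))) :=
    (measurable_const.mul (measurable_id.pow measurable_const)).ennreal_ofReal
  rw [show (Ioi (0:ℝ)) = Ioc 0 t₀ ∪ Ioi t₀ from (Set.Ioc_union_Ioi_eq_Ioi ht₀.le).symm,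
    lintegral_union measurableSet_Ioi (Set.Ioc_disjoint_Ioi le_rfl)]
  have piece1 : ∫⁻ t in Ioc (0:ℝ) t₀, P {a | t ≤ Real.sqrt (S a) ^ (-k)} ∂volume
      ≤ ENNReal.ofReal t₀ := by
    calc ∫⁻ t in Ioc (0:ℝ) t₀, P {a | t ≤ Real.sqrt (S a) ^ (-k)} ∂volume
        ≤ ∫⁻ _ in Ioc (0:ℝ) t₀, 1 ∂volume := lintegral_mono fun t => prob_le_one
      _ = volume (Ioc (0:ℝ) t₀) := setLIntegral_one _
      _ = ENNReal.ofReal t₀ := by rw [Real.volume_Ioc, sub_zero]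
  have hr1 : -(N / k) < -1 := by
    have h1r : 1 < N / k := (one_lt_div hk).2 hNk
    linarith
  have piece2 : ∫⁻ t in Ioi t₀, P {a | t ≤ Real.sqrt (S a) ^ (-k)} ∂volume
      ≤ ENNReal.ofReal (t₀ * k) := by
    have hint : IntegrableOn (fun t : ℝ => β ^ (N / 2) * t ^ (-(N / k))) (Ioi t₀) :=
      (integrableOn_Ioi_rpow_of_lt hr1 ht₀).const_mul _
    calc ∫⁻ t in Ioi t₀, P {a | t ≤ Real.sqrt (S a) ^ (-k)} ∂volume
        ≤ ∫⁻ t in Ioi t₀, ENNReal.ofReal (β ^ (N / 2) * t ^ (-(N / k))) ∂volume := by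
          apply setLIntegral_mono hmb
          intro t ht'
          exact tail t (ht₀.trans ht')
      _ = ENNReal.ofReal (∫ t in Ioi t₀, β ^ (N / 2) * t ^ (-(N / k))) := by
          rw [← ofReal_integral_eq_lintegral_ofReal hint ?_]
          filter_upwards [ae_restrict_mem measurableSet_Ioi] with t ht'
          exact mul_nonneg (Real.rpow_nonneg hβ0.le _)
            (Real.rpow_nonneg (ht₀.trans ht').le _)
      _ ≤ ENNReal.ofReal (t₀ * k) := by
          apply ENNReal.ofReal_le_ofReal
          rw [MeasureTheory.integral_const_mul, integral_Ioi_rpow_of_lt hr1 ht₀]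
          have hβt : β ^ (N / 2) = t₀ ^ (N / k) := by
            rw [ht₀def, ← Real.rpow_mul hβ0.le]
            congr 1
            field_simp
          have hstep : β ^ (N / 2) * (-t₀ ^ (-(N / k) + 1) / (-(N / k) + 1))
              = t₀ / (N / k - 1) := by
            have hmul : t₀ ^ (N / k) * t₀ ^ (-(N / k - 1)) = t₀ := by
              rw [← Real.rpow_add ht₀, show N / k + -(N / k - 1) = 1 by ring, Real.rpow_one]
            rw [hβt, show (-(N / k) + 1) = -(N / k - 1) by ring, div_neg, neg_div, neg_neg,
              ← mul_div_assoc, hmul]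
          rw [hstep]
          rw [div_le_iff₀ (by linarith [(one_lt_div hk).2 hNk] : (0:ℝ) < N / k - 1)]
          have hkr : k * (N / k - 1) = N - k := by field_simp
          nlinarith [ht₀, hkr, hkN]
  calc (∫⁻ t in Ioc (0:ℝ) t₀, P {a | t ≤ Real.sqrt (S a) ^ (-k)} ∂volume)
        + ∫⁻ t in Ioi t₀, P {a | t ≤ Real.sqrt (S a) ^ (-k)} ∂volume
      ≤ ENNReal.ofReal t₀ + ENNReal.ofReal (t₀ * k) := add_le_add piece1 piece2
    _ = ENNReal.ofReal (t₀ + t₀ * k) := (ENNReal.ofReal_add ht₀.le (by positivity)).symm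
    _ = ENNReal.ofReal ((1 + k) * t₀) := by ring_nf
    _ ≤ ENNReal.ofReal ((1 + k) * (2 * π * Real.exp 1 * c ^ 2 / (T.card : ℝ)) ^ (k / 2)) :=
        le_of_eq rfl

end AuxLemmas

open Real Set in
set_option maxHeartbeats 1000000 in
/-- Inverse-moment bound for the vector with excluded components: there is a finite
constant `B₂` depending only on `k, n` and the `D`-class parameters such that for every
`(X_i) ∈ D`, every `p ≥ ⌈2k⌉(M+1) + 2(nM+1)`, and every index `i`, writing
`ℰⁿ(i) = {i-nM, …, i+nM}` (exclusion set) and using the vector of the remaining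
components, `E[‖X_{-ℰⁿ(i)} - m_{p,-ℰⁿ(i)}‖^{-k}] ≤ B₂ / (E‖X_{-ℰⁿ(i)} - m_{p,-ℰⁿ(i)}‖²)^{k/2}`. -/
theorem excluded_components_inverse_moment_bound
    (M : ℕ) (q c σmin C : ℝ) (hc : 0 < c) (hσ : 0 < σmin) (hq : 2 < q) (hC : 1 ≤ C)
    (k : ℝ) (hk : 0 < k) (n : ℕ) :
    ∃ B₂ : ℝ,
      ∀ (Ω : Type) [MeasurableSpace Ω] (P : Measure Ω), IsProbabilityMeasure P →
        ∀ X : ℕ → Ω → ℝ, MemD P M q c σmin C X →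
          ∀ p : ℕ, Nat.ceil (2 * k) * (M + 1) + 2 * (n * M + 1) ≤ p →
            ∀ i : Fin p, ∀ m : EuclideanSpace ℝ (Fin p),
              IsGeometricMedian P (vecOf X p) m →
              ∫⁻ ω, ENNReal.ofReal
                  ((Real.sqrt (∑ j ∈ Finset.univ.filter
                      (fun j : Fin p => j.1 < i.1 - n * M ∨ i.1 + n * M < j.1),
                      (X j.1 ω - m j) ^ 2)) ^ (-k)) ∂P
                ≤ ENNReal.ofReal (B₂ /
                    (∫ ω, ∑ j ∈ Finset.univ.filter
                      (fun j : Fin p => j.1 < i.1 - n * M ∨ i.1 + n * M < j.1),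
                      (X j.1 ω - m j) ^ 2 ∂P) ^ (k / 2)) := by
  have hC0 : (0:ℝ) < C := lt_of_lt_of_le one_pos hC
  refine ⟨(1 + k) * (2 * π * Real.exp 1 * c ^ 2 *
      (20 * C * (2 * (n:ℝ) * (M:ℝ) + (M:ℝ) + 2))) ^ (k / 2), ?_⟩
  intro Ω _ P hP X hX p hp i m hm
  haveI := hP
  set J : Finset (Fin p) := Finset.univ.filter
    (fun j : Fin p => j.1 < i.1 - n * M ∨ i.1 + n * M < j.1) with hJdef
  set ES : ℝ := ∫ ω, ∑ j ∈ J, (X j.1 ω - m j) ^ 2 ∂P with hESdef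
  have hXm := hX.measurable
  -- square moments
  have hsqb : ∀ j : ℕ, Integrable (fun ω => X j ω ^ 2) P ∧ ∫ ω, X j ω ^ 2 ∂P ≤ 2 * C :=
    fun j => sq_moment_bound P hq.le hC (X j) (hXm j) (hX.mom_le j)
  have hmem2 : ∀ j : ℕ, MemLp (X j) 2 P := fun j =>
    (memLp_two_iff_integrable_sq (hXm j).aestronglyMeasurable).2 (hsqb j).1
  -- counting
  have hcards : J.card + (Finset.univ.filter
      (fun j : Fin p => ¬(j.1 < i.1 - n * M ∨ i.1 + n * M < j.1))).card = p := by
    rw [hJdef, Finset.card_filter_add_card_filter_not, Finset.card_univ,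
      Fintype.card_fin]
  have hJc : (Finset.univ.filter
      (fun j : Fin p => ¬(j.1 < i.1 - n * M ∨ i.1 + n * M < j.1))).card
        ≤ 2 * (n * M) + 1 := by
    set K := Finset.univ.filter
      (fun j : Fin p => ¬(j.1 < i.1 - n * M ∨ i.1 + n * M < j.1)) with hK
    have hsub : K.image Fin.val ⊆ Finset.Icc (i.1 - n * M) (i.1 + n * M) := by
      intro x hx
      obtain ⟨j, hj, rfl⟩ := Finset.mem_image.1 hx
      have := (Finset.mem_filter.1 hj).2
      push_neg at this
      simp only [Finset.mem_Icc]
      omega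
    calc K.card = (K.image Fin.val).card :=
          (Finset.card_image_of_injective K Fin.val_injective).symm
      _ ≤ (Finset.Icc (i.1 - n * M) (i.1 + n * M)).card := Finset.card_le_card hsub
      _ ≤ 2 * (n * M) + 1 := by rw [Nat.card_Icc]; omega
  have hJcard : Nat.ceil (2 * k) * (M + 1) + 1 ≤ J.card := by omega
  set Jnat : Finset ℕ := J.image Fin.val with hJnatdef
  have hJnatcard : Jnat.card = J.card := Finset.card_image_of_injective _ Fin.val_injective
  obtain ⟨T, hTsub, hTgap, hTcard⟩ := exists_gapped M Jnat
  have hTcard1 : Nat.ceil (2 * k) + 1 ≤ T.card := by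
    by_contra h
    push_neg at h
    have h2 : (M + 1) * T.card ≤ (M + 1) * Nat.ceil (2 * k) :=
      Nat.mul_le_mul_left _ (by omega)
    have h3 : (M + 1) * Nat.ceil (2 * k) = Nat.ceil (2 * k) * (M + 1) := Nat.mul_comm _ _
    omega
  have hT1 : 1 ≤ T.card := by omega
  have hkN : k + 1 ≤ (T.card : ℝ) := by
    have h2k : 2 * k ≤ (Nat.ceil (2 * k) : ℝ) := Nat.le_ceil _
    have hcst : ((Nat.ceil (2 * k) + 1 : ℕ) : ℝ) ≤ (T.card : ℝ) := Nat.cast_le.2 hTcard1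
    push_cast at hcst
    linarith
  -- vector pieces
  set a : ℕ → ℝ := fun t => if h : t < p then m ⟨t, h⟩ else 0 with hadef
  have hSnat : ∀ ω, ∑ j ∈ J, (X j.1 ω - m j) ^ 2 = ∑ t ∈ Jnat, (X t ω - a t) ^ 2 := by
    intro ω
    rw [hJnatdef, Finset.sum_image (fun x _ y _ h => Fin.val_injective h)]
    refine Finset.sum_congr rfl fun j _ => ?_
    have haj : a j.1 = m j := by rw [hadef]; simp [j.isLt]
    rw [haj]
  have hSmeas : Measurable (fun ω => ∑ j ∈ J, (X j.1 ω - m j) ^ 2) :=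
    Finset.measurable_sum _ (fun j _ =>
      ((hXm j.1).sub_const (m j)).pow measurable_const)
  have hS0 : ∀ ω, (0:ℝ) ≤ ∑ j ∈ J, (X j.1 ω - m j) ^ 2 :=
    fun ω => Finset.sum_nonneg fun j _ => sq_nonneg _
  have hST : ∀ ω, ∑ t ∈ T, (X t ω - a t) ^ 2 ≤ ∑ j ∈ J, (X j.1 ω - m j) ^ 2 := by
    intro ω
    rw [hSnat ω]
    exact Finset.sum_le_sum_of_subset_of_nonneg hTsub (fun t _ _ => sq_nonneg _)
  have hkey := core_bound P M hc X hXm hX.mdep hX.absCont hX.density_le a T hTgap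
    (fun ω => ∑ j ∈ J, (X j.1 ω - m j) ^ 2) hSmeas hST hS0 hk hkN
  -- integrability of terms
  have hterm_int : ∀ j : Fin p, Integrable (fun ω => (X j.1 ω - m j) ^ 2) P := fun j =>
    (memLp_two_iff_integrable_sq (((hXm j.1).sub_const (m j)).aestronglyMeasurable)).1
      ((hmem2 j.1).sub (memLp_const (m j)))
  have hES_eq : ES = ∑ j ∈ J, ∫ ω, (X j.1 ω - m j) ^ 2 ∂P :=
    integral_finset_sum J (fun j _ => hterm_int j)
  -- positivity of ES
  have hJne : J.Nonempty := Finset.card_pos.1 (by omega)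
  obtain ⟨j₀, hj₀⟩ := hJne
  have hvar0 : σmin ^ 2 ≤ ∫ ω, (X j₀.1 ω - m j₀) ^ 2 ∂P :=
    le_trans (hX.sd_ge j₀.1) (variance_le_integral_sq_sub P (X j₀.1) (hmem2 j₀.1) (m j₀))
  have hES_pos : 0 < ES := by
    rw [hES_eq]
    have hs := Finset.single_le_sum (f := fun j : Fin p => ∫ ω, (X j.1 ω - m j) ^ 2 ∂P)
      (fun j _ => integral_nonneg fun ω => sq_nonneg _) hj₀
    nlinarith [hσ, hs, hvar0]
  -- norm bounds
  have hvec_meas : Measurable (vecOf X p) := (WithLp.measurable_toLp 2 _).comp (measurable_pi_lambda _ (fun j : Fin p => hXm j.1))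
  have hnorm_sq : ∀ ω, ‖vecOf X p ω‖ ^ 2 = ∑ j : Fin p, X j.1 ω ^ 2 := by
    intro ω
    rw [EuclideanSpace.norm_eq, Real.sq_sqrt
      (Finset.sum_nonneg fun j _ => sq_nonneg _)]
    exact Finset.sum_congr rfl fun j _ => by
      rw [Real.norm_eq_abs, sq_abs]; rfl
  have hnXsq_int : Integrable (fun ω => ‖vecOf X p ω‖ ^ 2) P := by
    rw [show (fun ω => ‖vecOf X p ω‖ ^ 2) = fun ω => ∑ j : Fin p, X j.1 ω ^ 2 from
      funext hnorm_sq]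
    exact integrable_finset_sum _ (fun j _ => (hsqb j.1).1)
  have hnXsq_le : ∫ ω, ‖vecOf X p ω‖ ^ 2 ∂P ≤ 2 * C * p := by
    rw [show (fun ω => ‖vecOf X p ω‖ ^ 2) = fun ω => ∑ j : Fin p, X j.1 ω ^ 2 from
      funext hnorm_sq]
    rw [integral_finset_sum _ (fun j _ => (hsqb j.1).1)]
    calc ∑ j : Fin p, ∫ ω, X j.1 ω ^ 2 ∂P ≤ ∑ _j : Fin p, 2 * C :=
          Finset.sum_le_sum (fun j _ => (hsqb j.1).2)
      _ = 2 * C * p := by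
          rw [Finset.sum_const, Finset.card_univ, Fintype.card_fin, nsmul_eq_mul]
          ring
  have hnX_meas : Measurable (fun ω => ‖vecOf X p ω‖) := hvec_meas.norm
  have hnX_int : Integrable (fun ω => ‖vecOf X p ω‖) P := by
    refine Integrable.mono' ((integrable_const (1:ℝ)).add hnXsq_int)
      hnX_meas.aestronglyMeasurable (Eventually.of_forall fun ω => ?_)
    simp only [Pi.add_apply]
    rw [Real.norm_eq_abs, abs_of_nonneg (norm_nonneg _)]
    nlinarith [norm_nonneg (vecOf X p ω), sq_nonneg (‖vecOf X p ω‖ - 1)]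
  have hnX2 : MemLp (fun ω => ‖vecOf X p ω‖) 2 P :=
    (memLp_two_iff_integrable_sq hnX_meas.aestronglyMeasurable).2 hnXsq_int
  have hCS : (∫ ω, ‖vecOf X p ω‖ ∂P) ^ 2 ≤ ∫ ω, ‖vecOf X p ω‖ ^ 2 ∂P := by
    have h1 := variance_nonneg (fun ω => ‖vecOf X p ω‖) P
    rw [variance_eq_sub hnX2] at h1
    have h2 : ∫ (x : Ω), ((fun ω => ‖vecOf X p ω‖) ^ 2) x ∂P
        = ∫ ω, ‖vecOf X p ω‖ ^ 2 ∂P := rfl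
    rw [h2] at h1
    linarith
  have hXm_int : Integrable (fun ω => ‖vecOf X p ω - m‖) P := by
    refine Integrable.mono' (hnX_int.add (integrable_const ‖m‖))
      ((hvec_meas.sub_const m).norm.aestronglyMeasurable)
      (Eventually.of_forall fun ω => ?_)
    simp only [Pi.add_apply]
    rw [Real.norm_eq_abs, abs_of_nonneg (norm_nonneg _)]
    exact norm_sub_le _ _
  have hmed : ∫ ω, ‖vecOf X p ω - m‖ ∂P ≤ ∫ ω, ‖vecOf X p ω‖ ∂P := by
    have h0 := hm 0
    simpa using h0
  have hm_le : ‖m‖ ≤ 2 * ∫ ω, ‖vecOf X p ω‖ ∂P := by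
    have h1 : ∫ (_ : Ω), ‖m‖ ∂P = ‖m‖ := by simp
    have h2 : ∫ (_ : Ω), ‖m‖ ∂P ≤ ∫ ω, (‖vecOf X p ω - m‖ + ‖vecOf X p ω‖) ∂P := by
      refine integral_mono (integrable_const _) (hXm_int.add hnX_int) fun ω => ?_
      calc ‖m‖ = ‖vecOf X p ω - (vecOf X p ω - m)‖ := by rw [sub_sub_cancel]
        _ ≤ ‖vecOf X p ω‖ + ‖vecOf X p ω - m‖ := norm_sub_le _ _
        _ = ‖vecOf X p ω - m‖ + ‖vecOf X p ω‖ := by ring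
    rw [integral_add hXm_int hnX_int] at h2
    linarith
  have hnX_nonneg : 0 ≤ ∫ ω, ‖vecOf X p ω‖ ∂P := integral_nonneg fun ω => norm_nonneg _
  have hm_sq : ‖m‖ ^ 2 ≤ 8 * C * p := by
    have h3 : ‖m‖ ^ 2 ≤ (2 * ∫ ω, ‖vecOf X p ω‖ ∂P) ^ 2 :=
      pow_le_pow_left₀ (norm_nonneg m) hm_le 2
    nlinarith [hCS, hnXsq_le]
  have hmJ : ∑ j ∈ J, m j ^ 2 ≤ 8 * C * p := by
    have h1 : ∑ j ∈ J, m j ^ 2 ≤ ∑ j : Fin p, m j ^ 2 :=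
      Finset.sum_le_sum_of_subset_of_nonneg (Finset.subset_univ J)
        (fun _ _ _ => sq_nonneg _)
    have h2 : ∑ j : Fin p, m j ^ 2 = ‖m‖ ^ 2 := by
      rw [EuclideanSpace.norm_eq, Real.sq_sqrt (Finset.sum_nonneg fun j _ => sq_nonneg _)]
      exact Finset.sum_congr rfl fun j _ => by rw [Real.norm_eq_abs, sq_abs]
    linarith
  have hterm_le : ∀ j ∈ J, ∫ ω, (X j.1 ω - m j) ^ 2 ∂P ≤ 4 * C + 2 * m j ^ 2 := by
    intro j _
    have hpt : ∀ ω, (X j.1 ω - m j) ^ 2 ≤ 2 * X j.1 ω ^ 2 + 2 * m j ^ 2 := fun ω => by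
      nlinarith [sq_nonneg (X j.1 ω + m j)]
    calc ∫ ω, (X j.1 ω - m j) ^ 2 ∂P
        ≤ ∫ ω, (2 * X j.1 ω ^ 2 + 2 * m j ^ 2) ∂P :=
          integral_mono (hterm_int j)
            (((hsqb j.1).1.const_mul 2).add (integrable_const _)) hpt
      _ = 2 * ∫ ω, X j.1 ω ^ 2 ∂P + 2 * m j ^ 2 := by
          rw [integral_add ((hsqb j.1).1.const_mul 2) (integrable_const _),
            MeasureTheory.integral_const_mul, integral_const]
          simp
      _ ≤ 4 * C + 2 * m j ^ 2 := by nlinarith [(hsqb j.1).2]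
  have hJle : (J.card : ℝ) ≤ (p : ℝ) := by
    have h := Finset.card_le_univ J
    rw [Fintype.card_fin] at h
    exact_mod_cast h
  have hES_le : ES ≤ 20 * C * p := by
    rw [hES_eq]
    calc ∑ j ∈ J, ∫ ω, (X j.1 ω - m j) ^ 2 ∂P
        ≤ ∑ j ∈ J, (4 * C + 2 * m j ^ 2) := Finset.sum_le_sum hterm_le
      _ = 4 * C * J.card + 2 * ∑ j ∈ J, m j ^ 2 := by
          rw [Finset.sum_add_distrib, Finset.sum_const, nsmul_eq_mul, ← Finset.mul_sum]
          ring
      _ ≤ 4 * C * p + 2 * (8 * C * p) := by nlinarith [hmJ, hJle, hC0]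
      _ = 20 * C * p := by ring
  -- p ≤ (2nM + M + 2) * T.card
  have hp_le : (p : ℝ) ≤ (2 * (n:ℝ) * (M:ℝ) + (M:ℝ) + 2) * (T.card : ℝ) := by
    have hnat : p ≤ (2 * (n * M) + M + 2) * T.card := by
      have h2 : (2 * (n * M) + 1) ≤ (2 * (n * M) + 1) * T.card :=
        Nat.le_mul_of_pos_right _ (by omega)
      have h3 : p ≤ (M + 1) * T.card + (2 * (n * M) + 1) * T.card := by omega
      calc p ≤ (M + 1) * T.card + (2 * (n * M) + 1) * T.card := h3
        _ = (2 * (n * M) + M + 2) * T.card := by ring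
    calc (p : ℝ) ≤ (((2 * (n * M) + M + 2) * T.card : ℕ) : ℝ) := Nat.cast_le.2 hnat
      _ = (2 * (n:ℝ) * (M:ℝ) + (M:ℝ) + 2) * (T.card : ℝ) := by push_cast; ring
  -- final real comparison
  have hN0 : (0:ℝ) < (T.card : ℝ) := by exact_mod_cast hT1
  have hfinal : (1 + k) * (2 * π * Real.exp 1 * c ^ 2 / (T.card : ℝ)) ^ (k / 2)
      ≤ (1 + k) * (2 * π * Real.exp 1 * c ^ 2 *
          (20 * C * (2 * (n:ℝ) * (M:ℝ) + (M:ℝ) + 2))) ^ (k / 2) / ES ^ (k / 2) := by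
    have hKnn : (0:ℝ) ≤ 2 * π * Real.exp 1 * c ^ 2 := by positivity
    have hC5 : (0:ℝ) < 20 * C * (2 * (n:ℝ) * (M:ℝ) + (M:ℝ) + 2) := by positivity
    have hESC5 : ES ≤ 20 * C * (2 * (n:ℝ) * (M:ℝ) + (M:ℝ) + 2) * (T.card : ℝ) := by
      calc ES ≤ 20 * C * p := hES_le
        _ ≤ _ := by nlinarith [hp_le, hC0]
    have h1 : 2 * π * Real.exp 1 * c ^ 2 / (T.card : ℝ)
        ≤ 2 * π * Real.exp 1 * c ^ 2 *
          (20 * C * (2 * (n:ℝ) * (M:ℝ) + (M:ℝ) + 2)) / ES := by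
      rw [div_le_div_iff₀ hN0 hES_pos]
      calc 2 * π * Real.exp 1 * c ^ 2 * ES
          ≤ 2 * π * Real.exp 1 * c ^ 2 *
            (20 * C * (2 * (n:ℝ) * (M:ℝ) + (M:ℝ) + 2) * (T.card : ℝ)) :=
            mul_le_mul_of_nonneg_left hESC5 hKnn
        _ = 2 * π * Real.exp 1 * c ^ 2 *
            (20 * C * (2 * (n:ℝ) * (M:ℝ) + (M:ℝ) + 2)) * (T.card : ℝ) := by ring
    have h2 := Real.rpow_le_rpow (by positivity) h1 (by positivity : (0:ℝ) ≤ k / 2)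
    rw [Real.div_rpow (by positivity) hES_pos.le] at h2
    have h3 := mul_le_mul_of_nonneg_left h2 (by linarith : (0:ℝ) ≤ 1 + k)
    calc (1 + k) * (2 * π * Real.exp 1 * c ^ 2 / (T.card : ℝ)) ^ (k / 2) ≤ _ := h3
      _ = _ := by ring
  have hkey' : ∫⁻ ω, ENNReal.ofReal
      ((Real.sqrt (∑ j ∈ J, (X j.1 ω - m j) ^ 2)) ^ (-k)) ∂P
      ≤ ENNReal.ofReal ((1 + k) * (2 * π * Real.exp 1 * c ^ 2 / (T.card : ℝ)) ^ (k / 2)) :=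
    hkey
  exact le_trans hkey' (ENNReal.ofReal_le_ofReal hfinal)
end
end

section
/- Let (Y_i)_{i∈ℕ} ∈ D(M, q, c, σ_min, C), let p ∈ ℕ, v ∈ ℝ^p, and set n := ⌊(p−1)/(M+1)⌋ + 1 and Y := (Y_1, …, Y_p). Then the random variables Y_{j(M+1)+1} for j = 0, …, n−1 are independent, and for every s ≥ 0, P( ‖Y − v‖² ≤ s ) ≤ (2c√s)^n. -/
open MeasureTheory ProbabilityTheory Filter
open scoped ENNReal

noncomputable section

/-- Interval bound from the density bound. -/
theorem aux_interval_bound {Ω : Type*} [MeasurableSpace Ω] (P : Measure Ω)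
    [IsProbabilityMeasure P]
    (X : Ω → ℝ) (hm : Measurable X) (c : ℝ) (hc : 0 ≤ c)
    (hac : Measure.map X P ≪ (volume : Measure ℝ))
    (hd : ∀ᵐ x ∂(volume : Measure ℝ), (Measure.map X P).rnDeriv volume x ≤ ENNReal.ofReal c)
    (l u : ℝ) :
    P (X ⁻¹' Set.Icc l u) ≤ ENNReal.ofReal (c * (u - l)) := by
  have h1 : P (X ⁻¹' Set.Icc l u) = Measure.map X P (Set.Icc l u) :=
    (Measure.map_apply hm measurableSet_Icc).symm
  have : IsProbabilityMeasure (Measure.map X P) := Measure.isProbabilityMeasure_map hm.aemeasurable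
  rw [h1, ← Measure.withDensity_rnDeriv_eq _ _ hac,
    withDensity_apply _ measurableSet_Icc]
  calc ∫⁻ x in Set.Icc l u, (Measure.map X P).rnDeriv volume x
      ≤ ∫⁻ _ in Set.Icc l u, ENNReal.ofReal c := by
        refine setLIntegral_mono_ae aemeasurable_const ?_
        filter_upwards [hd] with x hx using fun _ => hx
    _ = ENNReal.ofReal c * volume (Set.Icc l u) := by rw [setLIntegral_const]
    _ ≤ ENNReal.ofReal (c * (u - l)) := by
        rw [Real.volume_Icc, ENNReal.ofReal_mul hc]

/-- Independence of the subfamily `Y_{j(M+1)}` for an `M`-dependent sequence. -/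
theorem aux_indep_sub {Ω : Type*} [MeasurableSpace Ω] (P : Measure Ω) [IsProbabilityMeasure P]
    (M : ℕ) (Y : ℕ → Ω → ℝ) (hdep : MDependent P M Y) (n : ℕ) :
    iIndepFun (fun j : Fin n => Y (j.1 * (M + 1))) P := by
  rw [iIndepFun_iff_measure_inter_preimage_eq_mul]
  intro S sets hsets
  revert hsets
  induction S using Finset.induction_on_max with
  | empty => intro _; simp
  | insert a s ha ih =>
    intro hsets
    have hans : a ∉ s := fun h => lt_irrefl a (ha a h)
    rcases s.eq_empty_or_nonempty with rfl | hne
    · simp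
    · obtain ⟨b0, hb0⟩ := hne
      have hapos : 1 ≤ a.1 := by
        have := ha b0 hb0
        omega
      obtain ⟨t, ht⟩ : ∃ t, a.1 = t + 1 := ⟨a.1 - 1, by omega⟩
      set k := t * (M + 1) with hkdef
      have hk : k + M + 1 = a.1 * (M + 1) := by rw [ht]; ring
      have hle : ∀ b : Fin n, b ∈ s → b.1 * (M + 1) ≤ k := fun b hb =>
        Nat.mul_le_mul_right _ (by have := ha b hb; omega)
      set F : Ω → ({i : ℕ // i ≤ k} → ℝ) := fun ω => fun i => Y i.1 ω with hFdef
      set G : Ω → ({i : ℕ // k + M + 1 ≤ i} → ℝ) := fun ω => fun i => Y i.1 ω with hGdef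
      set sF : Set ({i : ℕ // i ≤ k} → ℝ) :=
        ⋂ b : {x : Fin n // x ∈ s},
          (fun g : {i : ℕ // i ≤ k} → ℝ => g ⟨b.1.1 * (M + 1), hle b.1 b.2⟩) ⁻¹' sets b.1
        with hsFdef
      set tG : Set ({i : ℕ // k + M + 1 ≤ i} → ℝ) :=
        (fun g : {i : ℕ // k + M + 1 ≤ i} → ℝ => g ⟨a.1 * (M + 1), le_of_eq hk⟩) ⁻¹' sets a
        with htGdef
      have msF : MeasurableSet sF :=
        MeasurableSet.iInter fun b =>
          (measurable_pi_apply _) (hsets b.1 (Finset.mem_insert_of_mem b.2))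
      have mtG : MeasurableSet tG :=
        (measurable_pi_apply _) (hsets a (Finset.mem_insert_self a s))
      have hF : F ⁻¹' sF = ⋂ b ∈ s, (fun j : Fin n => Y (j.1 * (M + 1))) b ⁻¹' sets b := by
        ext ω
        simp [hsFdef, hFdef, Set.mem_iInter, Subtype.forall]
      have hG : G ⁻¹' tG = (fun j : Fin n => Y (j.1 * (M + 1))) a ⁻¹' sets a := rfl
      calc P (⋂ i ∈ insert a s, (fun j : Fin n => Y (j.1 * (M + 1))) i ⁻¹' sets i)
          = P (F ⁻¹' sF ∩ G ⁻¹' tG) := by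
            rw [Finset.set_biInter_insert, hF, hG, Set.inter_comm]
        _ = P (F ⁻¹' sF) * P (G ⁻¹' tG) :=
            (hdep k).measure_inter_preimage_eq_mul _ _ msF mtG
        _ = (∏ i ∈ s, P ((fun j : Fin n => Y (j.1 * (M + 1))) i ⁻¹' sets i)) *
              P ((fun j : Fin n => Y (j.1 * (M + 1))) a ⁻¹' sets a) := by
            rw [hF, hG, ih (fun i hi => hsets i (Finset.mem_insert_of_mem hi))]
        _ = ∏ i ∈ insert a s, P ((fun j : Fin n => Y (j.1 * (M + 1))) i ⁻¹' sets i) := by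
            rw [Finset.prod_insert hans, mul_comm]

/-- Subfamily independence and small-ball bound: with `n = ⌊(p-1)/(M+1)⌋ + 1`, the
variables `Y_{j(M+1)}` (0-based; `j = 0, …, n-1`) are independent, and for every
`s ≥ 0`, `P(‖Y - v‖² ≤ s) ≤ (2c√s)^n`. -/
theorem independent_subfamily_small_ball
    {Ω : Type*} [MeasurableSpace Ω] (P : Measure Ω) [IsProbabilityMeasure P]
    (M : ℕ) (q c σmin C : ℝ) (hc : 0 < c) (hσ : 0 < σmin) (hq : 2 ≤ q) (hC : 1 ≤ C)
    (Y : ℕ → Ω → ℝ) (hY : MemD P M q c σmin C Y)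
    (p : ℕ) (hp : 1 ≤ p) (v : EuclideanSpace ℝ (Fin p)) :
    iIndepFun
      (fun j : Fin ((p - 1) / (M + 1) + 1) => Y (j.1 * (M + 1))) P ∧
    ∀ s : ℝ, 0 ≤ s →
      P {ω | ‖vecOf Y p ω - v‖ ^ 2 ≤ s}
        ≤ ENNReal.ofReal ((2 * c * Real.sqrt s) ^ ((p - 1) / (M + 1) + 1)) := by
  set n := (p - 1) / (M + 1) + 1 with hn
  have hindep := aux_indep_sub P M Y hY.mdep n
  refine ⟨hindep, fun s hs => ?_⟩
  -- indices are in range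
  have hlt : ∀ j : Fin n, j.1 * (M + 1) < p := by
    intro j
    have hj : j.1 ≤ (p - 1) / (M + 1) := by
      have := j.2
      omega
    have h2 : j.1 * (M + 1) ≤ p - 1 := (Nat.le_div_iff_mul_le (by omega : 0 < M + 1)).mp hj
    omega
  set idx : Fin n → Fin p := fun j => ⟨j.1 * (M + 1), hlt j⟩ with hidx
  set sets : Fin n → Set ℝ := fun j =>
    Set.Icc (v (idx j) - Real.sqrt s) (v (idx j) + Real.sqrt s) with hsets
  -- event inclusion
  have hsub : {ω | ‖vecOf Y p ω - v‖ ^ 2 ≤ s}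
      ⊆ ⋂ j ∈ (Finset.univ : Finset (Fin n)),
          (fun j : Fin n => Y (j.1 * (M + 1))) j ⁻¹' sets j := by
    intro ω hω
    simp only [Set.mem_iInter, Set.mem_preimage, Finset.mem_univ, forall_const]
    intro j
    have hnorm : ‖vecOf Y p ω - v‖ ^ 2 = ∑ i : Fin p, ((vecOf Y p ω - v) i) ^ 2 := by
      rw [EuclideanSpace.norm_eq, Real.sq_sqrt]
      · simp [sq_abs]
      · positivity
    have hterm : ((vecOf Y p ω - v) (idx j)) ^ 2 ≤ s := by
      calc ((vecOf Y p ω - v) (idx j)) ^ 2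
          ≤ ∑ i : Fin p, ((vecOf Y p ω - v) i) ^ 2 :=
            Finset.single_le_sum (f := fun i : Fin p => ((vecOf Y p ω - v) i) ^ 2)
              (fun i _ => sq_nonneg _) (Finset.mem_univ (idx j))
        _ ≤ s := by rw [← hnorm]; exact hω
    have habs : |Y (j.1 * (M + 1)) ω - v (idx j)| ≤ Real.sqrt s := by
      have h1 : (vecOf Y p ω - v) (idx j) = Y (j.1 * (M + 1)) ω - v (idx j) := by simp [vecOf]; rfl
      rw [h1] at hterm
      calc |Y (j.1 * (M + 1)) ω - v (idx j)|
          = Real.sqrt ((Y (j.1 * (M + 1)) ω - v (idx j)) ^ 2) := (Real.sqrt_sq_eq_abs _).symm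
        _ ≤ Real.sqrt s := Real.sqrt_le_sqrt hterm
    rw [abs_sub_le_iff] at habs
    constructor
    · linarith [habs.2]
    · linarith [habs.1]
  have hmeas_sets : ∀ j : Fin n, MeasurableSet (sets j) := fun j => measurableSet_Icc
  have hsqrt : (0 : ℝ) ≤ 2 * c * Real.sqrt s := by positivity
  calc P {ω | ‖vecOf Y p ω - v‖ ^ 2 ≤ s}
      ≤ P (⋂ j ∈ (Finset.univ : Finset (Fin n)),
          (fun j : Fin n => Y (j.1 * (M + 1))) j ⁻¹' sets j) := measure_mono hsub
    _ = ∏ j : Fin n, P ((fun j : Fin n => Y (j.1 * (M + 1))) j ⁻¹' sets j) :=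
        (iIndepFun_iff_measure_inter_preimage_eq_mul.mp hindep) Finset.univ
          (fun j _ => hmeas_sets j)
    _ ≤ ∏ _j : Fin n, ENNReal.ofReal (2 * c * Real.sqrt s) := by
        refine Finset.prod_le_prod' fun j _ => ?_
        have := aux_interval_bound P (Y (j.1 * (M + 1))) (hY.measurable _) c hc.le
          (hY.absCont _) (hY.density_le _)
          (v (idx j) - Real.sqrt s) (v (idx j) + Real.sqrt s)
        have heq : c * ((v (idx j) + Real.sqrt s) - (v (idx j) - Real.sqrt s))
            = 2 * c * Real.sqrt s := by ring
        rw [heq] at this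
        exact this
    _ = ENNReal.ofReal ((2 * c * Real.sqrt s) ^ n) := by
        rw [Finset.prod_const, Finset.card_univ, Fintype.card_fin,
          ← ENNReal.ofReal_pow hsqrt]
end
end
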